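/- arXiv:2310.05252 — 2 statements merged into one kernel-verified Lean document; each statement's English description precedes it below -/
import Mathlib

section
/- Suppose the MPDA rule D^M is manipulable at profile P by a coalition A' via misreports P̃_{A'}. Then every man weakly prefers his match at the true profile to his match at the manipulated profile: D^M_m(P) R_m D^M_m(P̃_{A'}, P_{-A'}) for all men m. -/
/-- A one-to-one matching between men `M` and women `W`; `none` means unmatched. -/
structure Matching (M W : Type*) where
  menMatch : M → Option W
  womenMatch : W → Option M
  consistent : ∀ m w, menMatch m = some w ↔ womenMatch w = some m

/-- A preference profile: each man has a strict linear order over `W ∪ {∅}`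
(encoded as `Option W`, with `none` the outside option), and each woman over `M ∪ {∅}`. -/
structure Profile (M W : Type*) where
  menPref : M → LinearOrder (Option W)
  womenPref : W → LinearOrder (Option M)

variable {M W : Type*}

def IndividuallyRational (μ : Matching M W) (P : Profile M W) : Prop :=
  (∀ m, (P.menPref m).le none (μ.menMatch m)) ∧
  (∀ w, (P.womenPref w).le none (μ.womenMatch w))

def Blocks (m : M) (w : W) (μ : Matching M W) (P : Profile M W) : Prop :=
  (P.menPref m).lt (μ.menMatch m) (some w) ∧
  (P.womenPref w).lt (μ.womenMatch w) (some m)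

def Stable (μ : Matching M W) (P : Profile M W) : Prop :=
  IndividuallyRational μ P ∧ ∀ m w, ¬ Blocks m w μ P

/-- The men-optimal stable matching: stable, and every man weakly prefers it to
any stable matching.  This characterizes the outcome of the men-proposing
deferred acceptance (MPDA) algorithm. -/
def MenOptimalStable (μ : Matching M W) (P : Profile M W) : Prop :=
  Stable μ P ∧
    ∀ ν : Matching M W, Stable ν P → ∀ m, (P.menPref m).le (ν.menMatch m) (μ.menMatch m)

/-- The women-optimal stable matching, i.e. the outcome of women-proposing DA. -/
def WomenOptimalStable (μ : Matching M W) (P : Profile M W) : Prop :=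
  Stable μ P ∧
    ∀ ν : Matching M W, Stable ν P → ∀ w, (P.womenPref w).le (ν.womenMatch w) (μ.womenMatch w)

def Matching.empty (M W : Type*) : Matching M W :=
  ⟨fun _ => none, fun _ => none, by intro m w; simp⟩

/-- The men-proposing deferred acceptance rule `D^M`. -/
noncomputable def mpda (P : Profile M W) : Matching M W :=
  letI := Classical.dec (∃ μ : Matching M W, MenOptimalStable μ P)
  if h : ∃ μ : Matching M W, MenOptimalStable μ P then h.choose else Matching.empty M W

/-- The women-proposing deferred acceptance rule `D^W`. -/
noncomputable def wpda (P : Profile M W) : Matching M W :=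
  letI := Classical.dec (∃ μ : Matching M W, WomenOptimalStable μ P)
  if h : ∃ μ : Matching M W, WomenOptimalStable μ P then h.choose else Matching.empty M W

/-- A domain of preference profiles: a set of admissible preferences for each agent. -/
structure Domain (M W : Type*) where
  men : M → Set (LinearOrder (Option W))
  women : W → Set (LinearOrder (Option M))

/-- Membership of a profile in (the product domain generated by) a domain. -/
def Domain.mem (D : Domain M W) (P : Profile M W) : Prop :=
  (∀ m, P.menPref m ∈ D.men m) ∧ (∀ w, P.womenPref w ∈ D.women w)

def Profile.updateMan [DecidableEq M] (P : Profile M W) (m : M)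
    (p : LinearOrder (Option W)) : Profile M W :=
  ⟨Function.update P.menPref m p, P.womenPref⟩

def Profile.updateWoman [DecidableEq W] (P : Profile M W) (w : W)
    (p : LinearOrder (Option M)) : Profile M W :=
  ⟨P.menPref, Function.update P.womenPref w p⟩

/-- A matching rule is stable on a domain if it selects a stable matching at
every profile of the domain. -/
def StableOn (D : Domain M W) (φ : Profile M W → Matching M W) : Prop :=
  ∀ P, D.mem P → Stable (φ P) P

/-- Strategy-proofness on a domain: no single agent can strictly gain by
misreporting an admissible preference. -/
def StrategyProofOn [DecidableEq M] [DecidableEq W] (D : Domain M W)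
    (φ : Profile M W → Matching M W) : Prop :=
  ∀ P, D.mem P →
    (∀ m p, p ∈ D.men m →
      (P.menPref m).le ((φ (P.updateMan m p)).menMatch m) ((φ P).menMatch m)) ∧
    (∀ w p, p ∈ D.women w →
      (P.womenPref w).le ((φ (P.updateWoman w p)).womenMatch w) ((φ P).womenMatch w))

/-- A coalition `(Sm, Sw)` manipulates `φ` at `P` via the admissible profile `Q`
(which agrees with `P` outside the coalition): every coalition member is
strictly better off at `φ Q` than at `φ P` according to true preferences. -/
def Manipulation (D : Domain M W) (φ : Profile M W → Matching M W)
    (P Q : Profile M W) (Sm : Set M) (Sw : Set W) : Prop :=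
  D.mem P ∧ D.mem Q ∧
  (∀ m ∉ Sm, Q.menPref m = P.menPref m) ∧
  (∀ w ∉ Sw, Q.womenPref w = P.womenPref w) ∧
  (∀ m ∈ Sm, (P.menPref m).lt ((φ P).menMatch m) ((φ Q).menMatch m)) ∧
  (∀ w ∈ Sw, (P.womenPref w).lt ((φ P).womenMatch w) ((φ Q).womenMatch w))

/-- Group strategy-proofness on a domain: no nonempty coalition can manipulate. -/
def GroupStrategyProofOn (D : Domain M W) (φ : Profile M W → Matching M W) : Prop :=
  ¬ ∃ (P Q : Profile M W) (Sm : Set M) (Sw : Set W),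
      (Sm.Nonempty ∨ Sw.Nonempty) ∧ Manipulation D φ P Q Sm Sw

/-- Top dominance for women. -/
def TopDominanceWomen (D : Domain M W) : Prop :=
  ∀ w : W, ∀ x : M, ∀ y z : Option M,
    (∃ P ∈ D.women w, P.lt y (some x) ∧ P.lt z y ∧ P.le none y) →
      ¬ ∃ P' ∈ D.women w, P'.lt z (some x) ∧ P'.lt y z ∧ P'.le none z

/-- Top dominance for men. -/
def TopDominanceMen (D : Domain M W) : Prop :=
  ∀ m : M, ∀ x : W, ∀ y z : Option W,
    (∃ P ∈ D.men m, P.lt y (some x) ∧ P.lt z y ∧ P.le none y) →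
      ¬ ∃ P' ∈ D.men m, P'.lt z (some x) ∧ P'.lt y z ∧ P'.le none z

/-- Unrestricted top pairs for men. -/
def UnrestrictedTopPairsMen (D : Domain M W) : Prop :=
  ∀ m : M,
    (∀ w w' : W, w ≠ w' → ∃ P ∈ D.men m, P.lt (some w') (some w) ∧
        ∀ z : Option W, z ≠ some w → z ≠ some w' → P.lt z (some w')) ∧
    (∀ w : W, ∃ P ∈ D.men m, P.lt none (some w) ∧
        ∀ z : Option W, z ≠ some w → z ≠ none → P.lt z none) ∧
    (∃ P ∈ D.men m, ∀ z : Option W, z ≠ none → P.lt z none)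

/-- Unrestricted top pairs for women. -/
def UnrestrictedTopPairsWomen (D : Domain M W) : Prop :=
  ∀ w : W,
    (∀ m m' : M, m ≠ m' → ∃ P ∈ D.women w, P.lt (some m') (some m) ∧
        ∀ z : Option M, z ≠ some m → z ≠ some m' → P.lt z (some m')) ∧
    (∀ m : M, ∃ P ∈ D.women w, P.lt none (some m) ∧
        ∀ z : Option M, z ≠ some m → z ≠ none → P.lt z none) ∧
    (∃ P ∈ D.women w, ∀ z : Option M, z ≠ none → P.lt z none)

/-- Single-peakedness of a preference over `Option α` with respect to a prior
order `ord` on `α`:  moving away from the peak (the most preferred element of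
`α`) on either side makes the preference decline. -/
def SinglePeaked {α : Type*} (ord : LinearOrder α) (P : LinearOrder (Option α)) : Prop :=
  ∀ peak : α, (∀ a : α, P.le (some a) (some peak)) →
    ∀ a b : α, ((ord.le peak a ∧ ord.lt a b) ∨ (ord.lt b a ∧ ord.le a peak)) →
      P.lt (some b) (some a)

/-- The maximal single-peaked domain with respect to orders on men and women. -/
def maximalSinglePeakedDomain (ordM : LinearOrder M) (ordW : LinearOrder W) : Domain M W :=
  ⟨fun _ => {P | SinglePeaked ordW P}, fun _ => {P | SinglePeaked ordM P}⟩

/-- A domain is single-peaked if all admissible preferences are single-peaked. -/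
def Domain.SinglePeakedDomain (D : Domain M W) (ordM : LinearOrder M)
    (ordW : LinearOrder W) : Prop :=
  (∀ m, ∀ P ∈ D.men m, SinglePeaked ordW P) ∧ (∀ w, ∀ P ∈ D.women w, SinglePeaked ordM P)

/-- Anonymity: all men share the same admissible set, and all women do too. -/
def Domain.Anonymous (D : Domain M W) : Prop :=
  (∀ m m' : M, D.men m = D.men m') ∧ (∀ w w' : W, D.women w = D.women w')

/-- Cyclical inclusion for men. -/
def CyclicalInclusionMen (D : Domain M W) : Prop :=
  ∀ m : M,
    (∃ P ∈ D.men m, ∀ z : Option W, z ≠ none → P.lt z none) ∧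
    (∀ w w' : W,
      (∃ P ∈ D.men m, P.lt (some w') (some w) ∧ P.lt none (some w')) →
      (∃ P ∈ D.men m, P.lt (some w) (some w') ∧ P.lt none (some w)))

/-- Cyclical inclusion for women. -/
def CyclicalInclusionWomen (D : Domain M W) : Prop :=
  ∀ w : W,
    (∃ P ∈ D.women w, ∀ z : Option M, z ≠ none → P.lt z none) ∧
    (∀ m m' : M,
      (∃ P ∈ D.women w, P.lt (some m') (some m) ∧ P.lt none (some m')) →
      (∃ P ∈ D.women w, P.lt (some m) (some m') ∧ P.lt none (some m)))

/-- The unrestricted domain: every strict linear order is admissible. -/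
def fullDomain (M W : Type*) : Domain M W :=
  ⟨fun _ => Set.univ, fun _ => Set.univ⟩


/-- A coalition `(Sm, Sw)` manipulates the MPDA rule at `P` via the misreport
profile `Q` (which agrees with `P` outside the coalition): every coalition
member is strictly better off under true preferences. -/
def MpdaManipulates (P Q : Profile M W) (Sm : Set M) (Sw : Set W) : Prop :=
  (∀ m ∉ Sm, Q.menPref m = P.menPref m) ∧
  (∀ w ∉ Sw, Q.womenPref w = P.womenPref w) ∧
  (∀ m ∈ Sm, (P.menPref m).lt ((mpda P).menMatch m) ((mpda Q).menMatch m)) ∧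
  (∀ w ∈ Sw, (P.womenPref w).lt ((mpda P).womenMatch w) ((mpda Q).womenMatch w))



section OrderHelpers
variable {α : Type*}

lemma lle_refl (L : LinearOrder α) (a : α) : L.le a a := by letI := L; exact le_refl a
lemma lle_trans (L : LinearOrder α) {a b c : α} (h : L.le a b) (h' : L.le b c) : L.le a c := by
  letI := L; exact le_trans h h'
lemma lle_antisymm (L : LinearOrder α) {a b : α} (h : L.le a b) (h' : L.le b a) : a = b := by
  letI := L; exact le_antisymm h h'
lemma lle_of_lt (L : LinearOrder α) {a b : α} (h : L.lt a b) : L.le a b := by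
  letI := L; exact le_of_lt h
lemma llt_of_le_of_lt (L : LinearOrder α) {a b c : α} (h : L.le a b) (h' : L.lt b c) :
    L.lt a c := by letI := L; exact lt_of_le_of_lt h h'
lemma llt_of_lt_of_le (L : LinearOrder α) {a b c : α} (h : L.lt a b) (h' : L.le b c) :
    L.lt a c := by letI := L; exact lt_of_lt_of_le h h'
lemma llt_irrefl (L : LinearOrder α) (a : α) : ¬ L.lt a a := by letI := L; exact lt_irrefl a
lemma llt_asymm (L : LinearOrder α) {a b : α} (h : L.lt a b) : ¬ L.lt b a := by
  letI := L; exact fun h' => absurd h (not_lt.mpr (le_of_lt h'))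
lemma lnot_le (L : LinearOrder α) {a b : α} : ¬ L.le a b ↔ L.lt b a := by
  letI := L; exact not_le
lemma lnot_lt (L : LinearOrder α) {a b : α} : ¬ L.lt a b ↔ L.le b a := by
  letI := L; exact not_lt
lemma llt_ne (L : LinearOrder α) {a b : α} (h : L.lt a b) : a ≠ b := by
  letI := L; exact ne_of_lt h
lemma llt_trichotomy (L : LinearOrder α) (a b : α) : L.lt a b ∨ a = b ∨ L.lt b a := by
  letI := L; exact lt_trichotomy a b
lemma llt_of_le_of_ne (L : LinearOrder α) {a b : α} (h : L.le a b) (h' : a ≠ b) : L.lt a b := by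
  letI := L; exact lt_of_le_of_ne h h'

noncomputable def cfilter (p : α → Prop) (s : Finset α) : Finset α :=
  @Finset.filter α p (Classical.decPred p) s

lemma mem_cfilter {p : α → Prop} {s : Finset α} {x : α} : x ∈ cfilter p s ↔ x ∈ s ∧ p x := by
  unfold cfilter; exact @Finset.mem_filter α p (Classical.decPred p) s x

noncomputable def lmax (L : LinearOrder α) (s : Finset α) (h : s.Nonempty) : α :=
  @Finset.max' α L s h

lemma lmax_mem (L : LinearOrder α) (s : Finset α) (h : s.Nonempty) : lmax L s h ∈ s :=
  @Finset.max'_mem α L s h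

lemma le_lmax (L : LinearOrder α) (s : Finset α) (h : s.Nonempty) {a : α} (ha : a ∈ s) :
    L.le a (lmax L s h) := @Finset.le_max' α L s a ha

end OrderHelpers

namespace DAux
open Finset

variable {M W : Type*} [Fintype M] [Fintype W]

/-- candidates still available to man `m` given rejection set `R`. -/
noncomputable def cands (R : Finset (M × W)) (m : M) : Finset (Option W) :=
  cfilter (fun x => x = none ∨ ∃ w : W, x = some w ∧ (m, w) ∉ R) Finset.univ

lemma none_mem_cands (R : Finset (M × W)) (m : M) : (none : Option W) ∈ cands R m := by
  rw [cands, mem_cfilter]; exact ⟨Finset.mem_univ _, Or.inl rfl⟩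

lemma cands_nonempty (R : Finset (M × W)) (m : M) : (cands R m).Nonempty :=
  ⟨none, none_mem_cands R m⟩

lemma some_mem_cands {R : Finset (M × W)} {m : M} {w : W} :
    some w ∈ cands R m ↔ (m, w) ∉ R := by
  rw [cands, mem_cfilter]
  constructor
  · rintro ⟨-, h | ⟨w', hw', hn⟩⟩
    · exact absurd h (by simp)
    · obtain rfl : w = w' := by injection hw'
      exact hn
  · intro h; exact ⟨Finset.mem_univ _, Or.inr ⟨w, rfl, h⟩⟩

lemma cands_anti {R R' : Finset (M × W)} (h : R ⊆ R') (m : M) :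
    cands R' m ⊆ cands R m := by
  intro x hx
  rw [cands, mem_cfilter] at hx ⊢
  refine ⟨Finset.mem_univ _, ?_⟩
  rcases hx.2 with h0 | ⟨w, rfl, hn⟩
  · exact Or.inl h0
  · exact Or.inr ⟨w, rfl, fun hc => hn (h hc)⟩

variable (P : Profile M W)

/-- current proposal target of man `m`. -/
noncomputable def tgt (R : Finset (M × W)) (m : M) : Option W :=
  lmax (P.menPref m) (cands R m) (cands_nonempty R m)

lemma tgt_mem (R : Finset (M × W)) (m : M) : tgt P R m ∈ cands R m :=
  lmax_mem _ _ _

lemma le_tgt {R : Finset (M × W)} {m : M} {x : Option W} (hx : x ∈ cands R m) :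
    (P.menPref m).le x (tgt P R m) := le_lmax _ _ _ hx

lemma none_le_tgt (R : Finset (M × W)) (m : M) : (P.menPref m).le none (tgt P R m) :=
  le_tgt P (none_mem_cands R m)

lemma tgt_not_rejected {R : Finset (M × W)} {m : M} {w : W} (h : tgt P R m = some w) :
    (m, w) ∉ R := by
  have := tgt_mem P R m; rw [h] at this; exact some_mem_cands.mp this

lemma tgt_anti {R R' : Finset (M × W)} (h : R ⊆ R') (m : M) :
    (P.menPref m).le (tgt P R' m) (tgt P R m) :=
  le_tgt P (cands_anti h m (tgt_mem P R' m))

/-- rejection condition: `m` currently proposes to `w` and `w` rejects him. -/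
def rej (R : Finset (M × W)) (m : M) (w : W) : Prop :=
  tgt P R m = some w ∧
    ((P.womenPref w).lt (some m) none ∨
      ∃ m', tgt P R m' = some w ∧ (P.womenPref w).lt (some m) (some m'))

noncomputable def step (R : Finset (M × W)) : Finset (M × W) :=
  cfilter (fun q => q ∈ R ∨ rej P R q.1 q.2) Finset.univ

lemma mem_step {R : Finset (M × W)} {q : M × W} :
    q ∈ step P R ↔ q ∈ R ∨ rej P R q.1 q.2 := by
  rw [step, mem_cfilter]; simp

lemma subset_step (R : Finset (M × W)) : R ⊆ step P R := fun q hq =>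
  (mem_step P).mpr (Or.inl hq)

noncomputable def RR : ℕ → Finset (M × W)
  | 0 => ∅
  | n + 1 => step P (RR n)

lemma RR_mono : ∀ {i j : ℕ}, i ≤ j → RR P i ⊆ RR P j := by
  intro i j h
  induction j with
  | zero => rw [Nat.le_zero.mp h]
  | succ j ih =>
    rcases Nat.lt_or_ge i (j+1) with h' | h'
    · exact fun q hq => subset_step P _ (ih (Nat.lt_succ_iff.mp h') hq)
    · rw [Nat.le_antisymm h h']

lemma exists_fix : ∃ n, step P (RR P n) = RR P n := by
  by_contra hc
  push_neg at hc
  have hcard : ∀ n : ℕ, n ≤ (RR P n).card := by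
    intro n
    induction n with
    | zero => exact Nat.zero_le _
    | succ n ih =>
      have hss : RR P n ⊂ RR P (n+1) :=
        HasSubset.Subset.ssubset_of_ne (subset_step P _) (fun h => hc n h.symm)
      exact Nat.succ_le_of_lt (Nat.lt_of_le_of_lt ih (Finset.card_lt_card hss))
  have := hcard (Fintype.card (M × W) + 1)
  have h2 := Finset.card_le_univ (RR P (Fintype.card (M × W) + 1))
  omega

noncomputable def N0 : ℕ := (exists_fix P).choose

noncomputable def F : Finset (M × W) := RR P (N0 P)

lemma step_F : step P (F P) = F P := (exists_fix P).choose_spec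

lemma RR_of_ge {n : ℕ} (h : N0 P ≤ n) : RR P n = F P := by
  obtain ⟨k, rfl⟩ := Nat.exists_eq_add_of_le h
  induction k with
  | zero => rfl
  | succ k ih =>
    have : RR P (N0 P + (k+1)) = step P (RR P (N0 P + k)) := rfl
    rw [this, ih (Nat.le_add_right _ _), step_F]

lemma RR_sub_F (n : ℕ) : RR P n ⊆ F P := by
  have h1 : RR P n ⊆ RR P (N0 P + n) := RR_mono P (Nat.le_add_left _ _)
  rwa [RR_of_ge P (Nat.le_add_right _ _)] at h1

lemma tgt_F_ne {m : M} {w : W} (h : (m, w) ∈ F P) : tgt P (F P) m ≠ some w :=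
  fun hc => tgt_not_rejected P hc h

lemma rej_F_mem {m : M} {w : W} (h : rej P (F P) m w) : (m, w) ∈ F P := by
  rw [← step_F P]; exact (mem_step P).mpr (Or.inr h)

lemma tgt_F_unique {m m' : M} {w : W} (h : tgt P (F P) m = some w)
    (h' : tgt P (F P) m' = some w) : m = m' := by
  by_contra hne
  have hne' : (some m : Option M) ≠ some m' := by simpa using hne
  rcases llt_trichotomy (P.womenPref w) (some m) (some m') with hlt | he | hgt
  · exact tgt_F_ne P (rej_F_mem P ⟨h, Or.inr ⟨m', h', hlt⟩⟩) h
  · exact hne' he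
  · exact tgt_F_ne P (rej_F_mem P ⟨h', Or.inr ⟨m, h, hgt⟩⟩) h'

lemma tgt_F_acc {m : M} {w : W} (h : tgt P (F P) m = some w) :
    (P.womenPref w).le none (some m) := by
  by_contra hc
  rw [lnot_le] at hc
  exact tgt_F_ne P (rej_F_mem P ⟨h, Or.inl hc⟩) h

/-- the matching produced by deferred acceptance. -/
noncomputable def muDA : Matching M W where
  menMatch m := tgt P (F P) m
  womenMatch w :=
    letI := Classical.dec (∃ m, tgt P (F P) m = some w)
    if h : ∃ m, tgt P (F P) m = some w then some h.choose else none
  consistent := by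
    intro m w
    letI := Classical.dec (∃ m, tgt P (F P) m = some w)
    constructor
    · intro h
      have hex : ∃ m, tgt P (F P) m = some w := ⟨m, h⟩
      show (if h : ∃ m, tgt P (F P) m = some w then some h.choose else none) = some m
      rw [dif_pos hex]
      exact congrArg some (tgt_F_unique P hex.choose_spec h)
    · intro h
      replace h : (if h : ∃ m, tgt P (F P) m = some w then some h.choose else none) = some m := h
      show tgt P (F P) m = some w
      by_cases hex : ∃ m, tgt P (F P) m = some w
      · rw [dif_pos hex] at h
        obtain rfl : hex.choose = m := by injection h
        exact hex.choose_spec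
      · rw [dif_neg hex] at h
        exact absurd h (by simp)

lemma muDA_men (m : M) : (muDA P).menMatch m = tgt P (F P) m := rfl

end DAux

namespace DAux
open Finset

variable {M W : Type*} [Fintype M] [Fintype W] (P : Profile M W)

lemma llt_trans' {α : Type*} (L : LinearOrder α) {a b c : α} (h : L.lt a b) (h' : L.lt b c) :
    L.lt a c := llt_of_lt_of_le L h (lle_of_lt L h')

/-- persistence: a non-rejected proposal target stays. -/
lemma tgt_persist {n : ℕ} {m : M} {w : W} (h : tgt P (RR P n) m = some w)
    (h2 : (m, w) ∉ RR P (n + 1)) : tgt P (RR P (n + 1)) m = some w := by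
  have hmem : some w ∈ cands (RR P (n+1)) m := some_mem_cands.mpr h2
  have h1 : (P.menPref m).le (some w) (tgt P (RR P (n+1)) m) := le_tgt P hmem
  have h3 : (P.menPref m).le (tgt P (RR P (n+1)) m) (some w) := by
    rw [← h]; exact tgt_anti P (RR_mono P (Nat.le_succ n)) m
  exact lle_antisymm _ h3 h1

/-- once a man reaches his final target he stays there. -/
lemma tgt_stays {k : ℕ} {m : M} {wf : W} (hsome : tgt P (F P) m = some wf)
    (h : tgt P (RR P k) m = some wf) : ∀ j, k ≤ j → tgt P (RR P j) m = some wf := by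
  intro j hj
  induction j with
  | zero => rw [Nat.le_zero.mp hj] at h; exact h
  | succ j ih =>
    rcases Nat.lt_or_ge k (j+1) with h' | h'
    · have hprev := ih (Nat.lt_succ_iff.mp h')
      have hnr : (m, wf) ∉ RR P (j+1) := fun hc => tgt_F_ne P (RR_sub_F P _ hc) hsome
      exact tgt_persist P hprev hnr
    · rw [Nat.le_antisymm hj h'] at h; exact h

noncomputable def ucands (n : ℕ) (w : W) : Finset (Option M) :=
  cfilter (fun y => y = none ∨ ∃ m, y = some m ∧ tgt P (RR P n) m = some w) Finset.univ

lemma none_mem_ucands (n : ℕ) (w : W) : (none : Option M) ∈ ucands P n w := by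
  rw [ucands, mem_cfilter]; exact ⟨Finset.mem_univ _, Or.inl rfl⟩

lemma some_mem_ucands {n : ℕ} {w : W} {m : M} :
    some m ∈ ucands P n w ↔ tgt P (RR P n) m = some w := by
  rw [ucands, mem_cfilter]
  constructor
  · rintro ⟨-, h | ⟨m', hm', ht⟩⟩
    · exact absurd h (by simp)
    · obtain rfl : m = m' := by injection hm'
      exact ht
  · intro h; exact ⟨Finset.mem_univ _, Or.inr ⟨m, rfl, h⟩⟩

noncomputable def uu (n : ℕ) (w : W) : Option M :=
  lmax (P.womenPref w) (ucands P n w) ⟨none, none_mem_ucands P n w⟩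

lemma uu_mem (n : ℕ) (w : W) : uu P n w ∈ ucands P n w := lmax_mem _ _ _

lemma le_uu {n : ℕ} {w : W} {y : Option M} (hy : y ∈ ucands P n w) :
    (P.womenPref w).le y (uu P n w) := le_lmax _ _ _ hy

lemma none_le_uu (n : ℕ) (w : W) : (P.womenPref w).le none (uu P n w) :=
  le_uu P (none_mem_ucands P n w)

lemma uu_cases (n : ℕ) (w : W) :
    uu P n w = none ∨ ∃ m, uu P n w = some m ∧ tgt P (RR P n) m = some w := by
  have := uu_mem P n w
  rw [ucands, mem_cfilter] at this
  rcases this.2 with h0 | ⟨m', hm', ht⟩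
  · exact Or.inl h0
  · exact Or.inr ⟨m', hm', ht⟩

lemma uu_mono (n : ℕ) (w : W) : (P.womenPref w).le (uu P n w) (uu P (n+1) w) := by
  rcases uu_cases P n w with hu | ⟨f, hu, hf⟩
  · rw [hu]; exact none_le_uu P (n+1) w
  · have hnr : (f, w) ∉ RR P (n+1) := by
      intro hc
      rcases (mem_step P).mp hc with hc' | ⟨-, hrej⟩
      · exact tgt_not_rejected P hf hc'
      · rcases hrej with hlt | ⟨m', hm', hlt⟩
        · have hh : (P.womenPref w).le none (some f) := by rw [← hu]; exact none_le_uu P n w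
          exact (lnot_le _).mpr hlt hh
        · have h1 : (P.womenPref w).le (some m') (some f) := by
            rw [← hu]; exact le_uu P ((some_mem_ucands P).mpr hm')
          exact (lnot_le _).mpr hlt h1
    have hper := tgt_persist P hf hnr
    rw [hu]
    exact le_uu P ((some_mem_ucands P).mpr hper)

lemma uu_mono_le {n n' : ℕ} (h : n ≤ n') (w : W) :
    (P.womenPref w).le (uu P n w) (uu P n' w) := by
  induction n' with
  | zero => rw [Nat.le_zero.mp h]; exact lle_refl _ _
  | succ n' ih =>
    rcases Nat.lt_or_ge n (n'+1) with h' | h'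
    · exact lle_trans _ (ih (Nat.lt_succ_iff.mp h')) (uu_mono P n' w)
    · rw [Nat.le_antisymm h h']; exact lle_refl _ _

lemma uu_F_eq (w : W) : uu P (N0 P) w = (muDA P).womenMatch w := by
  letI := Classical.dec (∃ m, tgt P (F P) m = some w)
  show uu P (N0 P) w = if h : ∃ m, tgt P (F P) m = some w then some h.choose else none
  by_cases hex : ∃ m, tgt P (F P) m = some w
  · rw [dif_pos hex]
    rcases uu_cases P (N0 P) w with hu | ⟨m', hu, ht⟩
    · exfalso
      have h1 : (P.womenPref w).le (some hex.choose) (uu P (N0 P) w) :=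
        le_uu P ((some_mem_ucands P).mpr hex.choose_spec)
      rw [hu] at h1
      have hacc : (P.womenPref w).le none (some hex.choose) := tgt_F_acc P hex.choose_spec
      exact absurd (lle_antisymm (P.womenPref w) h1 hacc) (by simp)
    · rw [hu]
      exact congrArg some (tgt_F_unique P ht hex.choose_spec)
  · rw [dif_neg hex]
    rcases uu_cases P (N0 P) w with hu | ⟨m', hu, ht⟩
    · exact hu
    · exact absurd ⟨m', ht⟩ hex

lemma lt_tgt_mem_F {m : M} {w : W}
    (h : (P.menPref m).lt (tgt P (F P) m) (some w)) : (m, w) ∈ F P := by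
  by_contra hc
  have : (P.menPref m).le (some w) (tgt P (F P) m) := le_tgt P (some_mem_cands.mpr hc)
  exact (lnot_le _).mpr h this

lemma mem_F_event {m : M} {w : W} (h : (m, w) ∈ F P) :
    ∃ n, n < N0 P ∧ rej P (RR P n) m w := by
  have key : ∀ k, (m, w) ∈ RR P k → ∃ n, (m, w) ∉ RR P n ∧ (m, w) ∈ RR P (n + 1) := by
    intro k
    induction k with
    | zero => intro hk; exact absurd hk (Finset.notMem_empty _)
    | succ k ih =>
      intro hk
      by_cases hk' : (m, w) ∈ RR P k
      · exact ih hk'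
      · exact ⟨k, hk', hk⟩
  obtain ⟨n, hn1, hn2⟩ := key (N0 P) h
  have hrej : rej P (RR P n) m w := by
    rcases (mem_step P).mp hn2 with hc | hc
    · exact absurd hc hn1
    · exact hc
  refine ⟨n, ?_, hrej⟩
  by_contra hgt
  push_neg at hgt
  have e1 : RR P n = F P := RR_of_ge P hgt
  have e2 : RR P (n+1) = F P := RR_of_ge P (le_of_lt (Nat.lt_succ_of_le hgt))
  rw [e1] at hn1; rw [e2] at hn2; exact hn1 hn2

lemma muDA_IR : IndividuallyRational (muDA P) P := by
  constructor
  · intro m; exact none_le_tgt P (F P) m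
  · intro w
    rw [← uu_F_eq P w]
    exact none_le_uu P (N0 P) w

lemma muDA_stable : Stable (muDA P) P := by
  refine ⟨muDA_IR P, ?_⟩
  rintro m w ⟨h1, h2⟩
  have hmem : (m, w) ∈ F P := lt_tgt_mem_F P h1
  obtain ⟨n, hnN0, hrej⟩ := mem_F_event P hmem
  have hw_ir : (P.womenPref w).le none ((muDA P).womenMatch w) := (muDA_IR P).2 w
  rcases hrej.2 with hlt | ⟨m', hm', hlt⟩
  · exact llt_irrefl _ _ (llt_of_lt_of_le _ (llt_trans' _ h2 hlt) hw_ir)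
  · have h3 : (P.womenPref w).le (some m') (uu P n w) := le_uu P ((some_mem_ucands P).mpr hm')
    have h4 : (P.womenPref w).le (uu P n w) (uu P (N0 P) w) := uu_mono_le P (le_of_lt hnN0) w
    rw [uu_F_eq P w] at h4
    exact llt_irrefl _ _ (llt_of_lt_of_le _ (llt_of_lt_of_le _ (llt_trans' _ h2 hlt) h3) h4)

lemma rej_justified : ∀ (n : ℕ) (ν : Matching M W), Stable ν P →
    ∀ m w, (m, w) ∈ RR P n → ν.menMatch m ≠ some w := by
  intro n
  induction n with
  | zero => intro ν hν m w hmem; exact absurd hmem (Finset.notMem_empty _)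
  | succ n ih =>
    intro ν hν m w hmem heq
    rcases (mem_step P).mp hmem with hc | hrej
    · exact ih ν hν m w hc heq
    · have hνw : ν.womenMatch w = some m := (ν.consistent m w).mp heq
      rcases hrej.2 with hlt | ⟨m', hm', hlt⟩
      · have : (P.womenPref w).le none (some m) := by rw [← hνw]; exact hν.1.2 w
        exact (lnot_le _).mpr hlt this
      · -- (m', w) blocks ν
        have hmm' : m ≠ m' := by
          intro hc'; rw [hc'] at hlt; exact llt_irrefl _ _ hlt
        have hνm' : (P.menPref m').le (ν.menMatch m') (some w) := by
          cases hν' : ν.menMatch m' with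
          | none => rw [← hm']; exact none_le_tgt P _ m'
          | some w'' =>
            have : (m', w'') ∉ RR P n := fun hc' => ih ν hν m' w'' hc' hν'
            rw [← hm']
            exact le_tgt P (some_mem_cands.mpr this)
        have hne : ν.menMatch m' ≠ some w := by
          intro hc'
          have : ν.womenMatch w = some m' := (ν.consistent m' w).mp hc'
          rw [hνw] at this
          exact hmm' (by injection this)
        have hblocks : Blocks m' w ν P := by
          refine ⟨llt_of_le_of_ne _ hνm' hne, ?_⟩
          rw [hνw]; exact hlt
        exact hν.2 m' w hblocks

lemma muDA_optimal : ∀ ν : Matching M W, Stable ν P →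
    ∀ m, (P.menPref m).le (ν.menMatch m) ((muDA P).menMatch m) := by
  intro ν hν m
  cases hνm : ν.menMatch m with
  | none => exact none_le_tgt P (F P) m
  | some w =>
    have : (m, w) ∉ F P := fun hc => rej_justified P (N0 P) ν hν m w hc hνm
    exact le_tgt P (some_mem_cands.mpr this)

lemma muDA_menopt : MenOptimalStable (muDA P) P :=
  ⟨muDA_stable P, muDA_optimal P⟩

end DAux

theorem exists_menOptimalStable {M W : Type*} [Fintype M] [Fintype W] (P : Profile M W) :
    ∃ μ : Matching M W, MenOptimalStable μ P :=
  ⟨DAux.muDA P, DAux.muDA_menopt P⟩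

theorem mpda_spec {M W : Type*} [Fintype M] [Fintype W] (P : Profile M W) :
    MenOptimalStable (mpda P) P := by
  rw [mpda, dif_pos (exists_menOptimalStable P)]
  exact (exists_menOptimalStable P).choose_spec

lemma Matching.ext_men {M W : Type*} {μ ν : Matching M W}
    (h : ∀ m, μ.menMatch m = ν.menMatch m) : μ = ν := by
  obtain ⟨f, g, hc⟩ := μ
  obtain ⟨f', g', hc'⟩ := ν
  simp only at h
  have hf : f = f' := funext h
  subst hf
  have hg : g = g' := by
    funext w
    cases hg1 : g w with
    | some m => rw [← (hc' m w).mp ((hc m w).mpr hg1)]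
    | none =>
      cases hg2 : g' w with
      | none => rfl
      | some m =>
        rw [← hg1, (hc m w).mp ((hc' m w).mpr hg2)]
    
  subst hg
  rfl

lemma menOptimal_unique {M W : Type*} [Fintype M] [Fintype W] {P : Profile M W}
    {μ ν : Matching M W} (h1 : MenOptimalStable μ P) (h2 : MenOptimalStable ν P) : μ = ν :=
  Matching.ext_men (fun m => lle_antisymm _ (h2.2 μ h1.1 m) (h1.2 ν h2.1 m))

open DAux in
/-- The blocking lemma (tailored form): if some man strictly prefers an
individually rational matching `ν` to the men-optimal stable matching `μ`,
then there is a pair blocking `ν` whose man weakly prefers `μ` to `ν` and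
whose woman strictly prefers `μ` to `ν`. -/
lemma blocking_lemma {M W : Type*} [Fintype M] [Fintype W] (P : Profile M W)
    (μ ν : Matching M W) (hμ : MenOptimalStable μ P) (hIR : IndividuallyRational ν P)
    (m0 : M) (hm0 : (P.menPref m0).lt (μ.menMatch m0) (ν.menMatch m0)) :
    ∃ f wq, Blocks f wq ν P ∧ ¬ (P.menPref f).lt (μ.menMatch f) (ν.menMatch f) ∧
      (P.womenPref wq).lt (ν.womenMatch wq) (μ.womenMatch wq) := by
  classical
  have hTgt : ∀ m, μ.menMatch m = tgt P (F P) m := by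
    intro m
    rw [menOptimal_unique hμ (muDA_menopt P)]
    rfl
  -- the set of men strictly preferring ν
  set b : M → Prop := fun m => (P.menPref m).lt (μ.menMatch m) (ν.menMatch m) with hbdef
  have hbm0 : b m0 := hm0
  -- basic facts
  have fact_nu_some : ∀ m, b m → ∃ w, ν.menMatch m = some w := by
    intro m hbm
    have h1 : (P.menPref m).lt none (ν.menMatch m) :=
      llt_of_le_of_lt _ (hμ.1.1.1 m) hbm
    cases hν : ν.menMatch m with
    | none => rw [hν] at h1; exact absurd h1 (llt_irrefl _ _)
    | some w => exact ⟨w, rfl⟩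
  have fact2 : ∀ w m', ν.menMatch m' = some w → b m' →
      (P.womenPref w).le (some m') (μ.womenMatch w) ∧ μ.womenMatch w ≠ some m' := by
    intro w m' hν' hbm'
    have hA : (P.menPref m').lt (μ.menMatch m') (some w) := by rw [← hν']; exact hbm'
    have hnb := hμ.1.2 m' w
    rw [Blocks] at hnb
    push_neg at hnb
    have hle : (P.womenPref w).le (some m') (μ.womenMatch w) := hnb hA
    refine ⟨hle, ?_⟩
    intro hc
    have : μ.menMatch m' = some w := (μ.consistent m' w).mpr hc
    rw [this] at hA
    exact llt_irrefl _ _ hA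
  have fact2' : ∀ w m', ν.menMatch m' = some w → b m' →
      (P.womenPref w).lt (ν.womenMatch w) (μ.womenMatch w) := by
    intro w m' hν' hbm'
    obtain ⟨hle, hne⟩ := fact2 w m' hν' hbm'
    have hw : ν.womenMatch w = some m' := (ν.consistent m' w).mp hν'
    rw [hw]
    exact llt_of_le_of_ne _ hle (fun hc => hne hc.symm)
  have fact3 : ∀ w m', ν.menMatch m' = some w → b m' →
      ∃ mh, μ.womenMatch w = some mh := by
    intro w m' hν' hbm'
    obtain ⟨hle, -⟩ := fact2 w m' hν' hbm'
    cases hμw : μ.womenMatch w with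
    | none =>
      exfalso
      rw [hμw] at hle
      have hir : (P.womenPref w).le none (ν.womenMatch w) := hIR.2 w
      rw [(ν.consistent m' w).mp hν'] at hir
      exact absurd (lle_antisymm (P.womenPref w) hle hir) (by simp)
    | some mh => exact ⟨mh, rfl⟩
  by_cases hc : ∀ w m', ν.menMatch m' = some w → b m' → ∃ m'', b m'' ∧ μ.menMatch m'' = some w
  · -- CASE 2 : every ν-partner of a B-man is also a μ-partner of a B-man
    haveI : Nonempty M := ⟨m0⟩
    set Bs : Finset M := cfilter b Finset.univ with hBsdef
    have hmemBs : ∀ m, m ∈ Bs ↔ b m := by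
      intro m; rw [hBsdef, mem_cfilter]; simp
    set A : Finset (Option W) := Bs.image ν.menMatch with hAdef
    have hAsome : ∀ x ∈ A, ∃ w m', x = some w ∧ ν.menMatch m' = some w ∧ b m' := by
      intro x hx
      rw [hAdef, Finset.mem_image] at hx
      obtain ⟨m', hm'B, hx'⟩ := hx
      obtain ⟨w, hw⟩ := fact_nu_some m' ((hmemBs m').mp hm'B)
      exact ⟨w, m', by rw [← hx', hw], hw, (hmemBs m').mp hm'B⟩
    have hinj : Set.InjOn ν.menMatch Bs := by
      intro m1 h1 m2 h2 he
      obtain ⟨w, hw⟩ := fact_nu_some m1 ((hmemBs m1).mp h1)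
      have hw2 : ν.menMatch m2 = some w := by rw [← he, hw]
      have c1 := (ν.consistent m1 w).mp hw
      have c2 := (ν.consistent m2 w).mp hw2
      rw [c1] at c2
      injection c2
    have hcardA : A.card = Bs.card := Finset.card_image_of_injOn hinj
    set A2 : Finset (Option W) := Bs.image μ.menMatch with hA2def
    have hsub : A ⊆ A2 := by
      intro x hx
      obtain ⟨w, m', rfl, hν', hb'⟩ := hAsome x hx
      obtain ⟨m'', hb'', hμ''⟩ := hc w m' hν' hb'
      rw [hA2def, Finset.mem_image]
      exact ⟨m'', (hmemBs m'').mpr hb'', hμ''⟩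
    have hA2card : A2.card ≤ A.card := by
      rw [hcardA]; exact Finset.card_image_le
    have hAeq : A = A2 := Finset.eq_of_subset_of_card_le hsub hA2card
    have hμA : ∀ m, b m → μ.menMatch m ∈ A := by
      intro m hbm
      rw [hAeq, hA2def]
      exact Finset.mem_image_of_mem _ ((hmemBs m).mpr hbm)
    have hBmatched : ∀ m, b m → ∃ w, μ.menMatch m = some w := by
      intro m hbm
      obtain ⟨w, m', he, -, -⟩ := hAsome _ (hμA m hbm)
      exact ⟨w, he⟩
    set inW : W → Prop := fun w => some w ∈ A with hinWdef
    have hinWν : ∀ w, inW w → ∃ m', ν.menMatch m' = some w ∧ b m' := by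
      intro w hw
      obtain ⟨w', m', he, hν', hb'⟩ := hAsome _ hw
      obtain rfl : w = w' := by injection he
      exact ⟨m', hν', hb'⟩
    have hinWμ : ∀ w, inW w → ∃ m'', b m'' ∧ μ.menMatch m'' = some w := by
      intro w hw
      rw [hinWdef, hAeq, hA2def, Finset.mem_image] at hw
      obtain ⟨m'', hm''B, hμ''⟩ := hw
      exact ⟨m'', (hmemBs m'').mp hm''B, hμ''⟩
    have hinWlt : ∀ w, inW w → (P.womenPref w).lt (ν.womenMatch w) (μ.womenMatch w) := by
      intro w hw
      obtain ⟨m', hν', hb'⟩ := hinWν w hw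
      exact fact2' w m' hν' hb'
    have hμinW : ∀ m w, b m → μ.menMatch m = some w → inW w := by
      intro m w hbm hμm
      have := hμA m hbm
      rwa [hμm] at this
    choose! mfun hmb hmμ using hinWμ
    have hmfun_eq : ∀ w m, inW w → μ.menMatch m = some w → mfun w = m := by
      intro w m hw hm
      have c1 := (μ.consistent (mfun w) w).mp (hmμ w hw)
      have c2 := (μ.consistent m w).mp hm
      rw [c1] at c2
      injection c2
    have hsex : ∀ w, inW w →
        ∃ n, tgt P (RR P n) (mfun w) = some w ∧
          ∀ k, k < n → tgt P (RR P k) (mfun w) ≠ some w := by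
      intro w hw
      have hex : ∃ n, tgt P (RR P n) (mfun w) = some w := by
        refine ⟨N0 P, ?_⟩
        have := hmμ w hw
        rw [hTgt] at this
        exact this
      exact ⟨Nat.find hex, Nat.find_spec hex, fun k hk => Nat.find_min hex hk⟩
    choose! sfun hs1 hs2 using hsex
    set Ws : Finset W := cfilter inW Finset.univ with hWsdef
    have hmemWs : ∀ w, w ∈ Ws ↔ inW w := by
      intro w; rw [hWsdef, mem_cfilter]; simp
    have hWsne : Ws.Nonempty := by
      obtain ⟨w0, hw0⟩ := fact_nu_some m0 hbm0
      refine ⟨w0, (hmemWs w0).mpr ?_⟩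
      show some w0 ∈ A
      rw [hAdef, ← hw0]
      exact Finset.mem_image_of_mem _ ((hmemBs m0).mpr hbm0)
    have himgne : (Ws.image sfun).Nonempty := hWsne.image _
    set S : ℕ := (Ws.image sfun).max' himgne with hSdef
    have hS_le : ∀ w ∈ Ws, sfun w ≤ S :=
      fun w hw => Finset.le_max' _ _ (Finset.mem_image_of_mem _ hw)
    obtain ⟨wq, hwqWs, hwqS⟩ := Finset.mem_image.mp (Finset.max'_mem _ himgne)
    have hinWwq : inW wq := (hmemWs wq).mp hwqWs
    -- the mandatory players at wq
    obtain ⟨m₀, hνm₀, hbm₀'⟩ := hinWν wq hinWwq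
    have hνwwq : ν.womenMatch wq = some m₀ := (ν.consistent m₀ wq).mp hνm₀
    have hm₀acc : (P.womenPref wq).le none (some m₀) := by
      have := hIR.2 wq; rwa [hνwwq] at this
    -- rejection of (m₀, wq)
    have hltm₀ : (P.menPref m₀).lt (tgt P (F P) m₀) (some wq) := by
      rw [← hTgt, ← hνm₀]; exact hbm₀'
    obtain ⟨n, -, hrej⟩ := mem_F_event P (lt_tgt_mem_F P hltm₀)
    -- m₀'s own μ-partner w₂
    obtain ⟨w₂, hμm₀⟩ := hBmatched m₀ hbm₀'
    have hinWw₂ : inW w₂ := hμinW m₀ w₂ hbm₀' hμm₀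
    have hmfw₂ : mfun w₂ = m₀ := hmfun_eq w₂ m₀ hinWw₂ hμm₀
    have hw₂wq : w₂ ≠ wq := by
      intro hcq
      rw [hcq, hTgt] at hμm₀
      rw [hμm₀] at hltm₀
      exact llt_irrefl _ _ hltm₀
    have h_n_lt : n < sfun w₂ := by
      by_contra hge
      push_neg at hge
      have hspec := hs1 w₂ hinWw₂
      rw [hmfw₂] at hspec
      have hFw₂ : tgt P (F P) m₀ = some w₂ := by rw [← hTgt]; exact hμm₀
      have := tgt_stays P hFw₂ hspec n hge
      rw [hrej.1] at this
      exact hw₂wq (by injection this.symm)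
    have hnS : n < S := lt_of_lt_of_le h_n_lt (hS_le w₂ ((hmemWs w₂).mpr hinWw₂))
    set S1 : ℕ := S - 1 with hS1def
    have hS1S : S1 + 1 = S := by omega
    have hnS1 : n ≤ S1 := by omega
    -- at step n, woman wq holds someone better than m₀
    have hm₀uu : (P.womenPref wq).lt (some m₀) (uu P S1 wq) := by
      rcases hrej.2 with hlt | ⟨m₁, hm₁, hlt₁⟩
      · exact absurd hm₀acc ((lnot_le _).mpr hlt)
      · have h3 : (P.womenPref wq).le (some m₁) (uu P n wq) :=
          le_uu P ((some_mem_ucands P).mpr hm₁)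
        have h4 : (P.womenPref wq).le (uu P n wq) (uu P S1 wq) := uu_mono_le P hnS1 wq
        exact llt_of_lt_of_le _ (llt_of_lt_of_le _ hlt₁ h3) h4
    -- the holder f
    obtain ⟨f, huf, htf⟩ : ∃ f, uu P S1 wq = some f ∧ tgt P (RR P S1) f = some wq := by
      rcases uu_cases P S1 wq with hu | ⟨f, hu, ht⟩
      · exfalso
        rw [hu] at hm₀uu
        exact (lnot_le _).mpr hm₀uu hm₀acc
      · exact ⟨f, hu, ht⟩
    have hm₀f : (P.womenPref wq).lt (some m₀) (some f) := by rwa [huf] at hm₀uu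
    -- f is not wq's final partner mstar
    have hmstarμ : μ.menMatch (mfun wq) = some wq := hmμ wq hinWwq
    have hfne : f ≠ mfun wq := by
      intro hcq
      have := hs2 wq hinWwq S1 (by omega)
      rw [← hcq] at this
      exact this htf
    -- f survives to step S
    have hfS : tgt P (RR P S) f = some wq := by
      have hnr : (f, wq) ∉ RR P (S1 + 1) := by
        intro hcq
        rcases (mem_step P).mp hcq with hcq' | ⟨-, hresn⟩
        · exact tgt_not_rejected P htf hcq'
        · rcases hresn with hlt | ⟨m₂, hm₂, hlt₂⟩
          · have : (P.womenPref wq).le none (some f) := by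
              rw [← huf]; exact none_le_uu P S1 wq
            exact (lnot_le _).mpr hlt this
          · have : (P.womenPref wq).le (some m₂) (some f) := by
              rw [← huf]; exact le_uu P ((some_mem_ucands P).mpr hm₂)
            exact (lnot_le _).mpr hlt₂ this
      have := tgt_persist P htf hnr
      rwa [hS1S] at this
    have hmstarS : tgt P (RR P S) (mfun wq) = some wq := by
      have := hs1 wq hinWwq
      rwa [hwqS] at this
    -- f loses to mstar at step S
    have hflt : (P.womenPref wq).lt (some f) (some (mfun wq)) := by
      rcases llt_trichotomy (P.womenPref wq) (some f) (some (mfun wq)) with h | h | h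
      · exact h
      · exact absurd (by injection h) hfne
      · exfalso
        have hrej' : rej P (RR P S) (mfun wq) wq := ⟨hmstarS, Or.inr ⟨f, hfS, h⟩⟩
        have hmem' : (mfun wq, wq) ∈ RR P (S + 1) := (mem_step P).mpr (Or.inr hrej')
        have : tgt P (F P) (mfun wq) ≠ some wq := tgt_F_ne P (RR_sub_F P _ hmem')
        rw [← hTgt] at this
        exact this hmstarμ
    -- hence f is rejected at step S, so μ f < wq
    have hfrej : (f, wq) ∈ RR P (S + 1) :=
      (mem_step P).mpr (Or.inr ⟨hfS, Or.inr ⟨mfun wq, hmstarS, hflt⟩⟩)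
    have hμfne : tgt P (F P) f ≠ some wq := tgt_F_ne P (RR_sub_F P _ hfrej)
    have hμflt : (P.menPref f).lt (μ.menMatch f) (some wq) := by
      rw [hTgt]
      refine llt_of_le_of_ne _ ?_ hμfne
      rw [← hfS]
      exact tgt_anti P (RR_sub_F P S) f
    -- f is not in B
    have hfb : ¬ b f := by
      intro hbf
      obtain ⟨w₃, hμf⟩ := hBmatched f hbf
      have hinW₃ : inW w₃ := hμinW f w₃ hbf hμf
      have hmf₃ : mfun w₃ = f := hmfun_eq w₃ f hinW₃ hμf
      have hspec := hs1 w₃ hinW₃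
      rw [hmf₃] at hspec
      have hFf : tgt P (F P) f = some w₃ := by rw [← hTgt]; exact hμf
      have hstay := tgt_stays P hFf hspec S (hS_le w₃ ((hmemWs w₃).mpr hinW₃))
      rw [hfS] at hstay
      obtain rfl : wq = w₃ := by injection hstay
      rw [hμf] at hμflt
      exact llt_irrefl _ _ hμflt
    -- conclusion : (f, wq) blocks ν
    refine ⟨f, wq, ⟨?_, ?_⟩, hfb, hinWlt wq hinWwq⟩
    · have : (P.menPref f).le (ν.menMatch f) (μ.menMatch f) := (lnot_lt _).mp hfb
      exact llt_of_le_of_lt _ this hμflt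
    · rw [hνwwq]
      exact hm₀f
  · -- CASE 1 : some woman in ν(B) is not in μ(B)
    push_neg at hc
    obtain ⟨w, m', hνm', hbm', hall⟩ := hc
    obtain ⟨mh, hμw⟩ := fact3 w m' hνm' hbm'
    have hμmh : μ.menMatch mh = some w := (μ.consistent mh w).mpr hμw
    have hnb : ¬ b mh := fun hbh => hall mh hbh hμmh
    refine ⟨mh, w, ⟨?_, ?_⟩, hnb, fact2' w m' hνm' hbm'⟩
    · have hle : (P.menPref mh).le (ν.menMatch mh) (μ.menMatch mh) := (lnot_lt _).mp hnb
      rw [hμmh] at hle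
      refine llt_of_le_of_ne _ hle ?_
      intro hcq
      have := (ν.consistent mh w).mp hcq
      rw [(ν.consistent m' w).mp hνm'] at this
      obtain rfl : m' = mh := by injection this
      exact hnb hbm'
    · rw [(ν.consistent m' w).mp hνm', ← hμw]
      obtain ⟨hle, hne⟩ := fact2 w m' hνm' hbm'
      exact llt_of_le_of_ne _ hle (fun hcq => hne hcq.symm)

/-- under any manipulation of MPDA, every man weakly prefers his
match at the true profile to his match at the manipulated profile. -/

theorem men_weakly_worse_off [Fintype M] [Fintype W]
    (P Q : Profile M W) (Sm : Set M) (Sw : Set W)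
    (h : MpdaManipulates P Q Sm Sw) (m : M) :
    (P.menPref m).le ((mpda Q).menMatch m) ((mpda P).menMatch m) := by
  classical
  obtain ⟨hQm, hQw, hSm, hSw⟩ := h
  have hPspec := mpda_spec P
  have hQspec := mpda_spec Q
  by_contra hcon
  have hm : (P.menPref m).lt ((mpda P).menMatch m) ((mpda Q).menMatch m) :=
    (lnot_le _).mp hcon
  have hIRP : IndividuallyRational (mpda Q) P := by
    constructor
    · intro m'
      by_cases hb : (P.menPref m').lt ((mpda P).menMatch m') ((mpda Q).menMatch m')
      · exact lle_trans _ (hPspec.1.1.1 m') (lle_of_lt _ hb)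
      · have hm'Sm : m' ∉ Sm := fun hmem => hb (hSm m' hmem)
        rw [← hQm m' hm'Sm]
        exact hQspec.1.1.1 m'
    · intro w
      by_cases hw : w ∈ Sw
      · exact lle_trans _ (hPspec.1.1.2 w) (lle_of_lt _ (hSw w hw))
      · rw [← hQw w hw]
        exact hQspec.1.1.2 w
  obtain ⟨f, wq, hblocks, hnb, hwlt⟩ :=
    blocking_lemma P (mpda P) (mpda Q) hPspec hIRP m hm
  have hfSm : f ∉ Sm := fun hf => hnb (hSm f hf)
  have hwSw : wq ∉ Sw := fun hw => llt_asymm _ (hSw wq hw) hwlt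
  refine hQspec.1.2 f wq ⟨?_, ?_⟩
  · rw [hQm f hfSm]
    exact hblocks.1
  · rw [hQw wq hwSw]
    exact hblocks.2
end

section
/- If the domain of preference profiles satisfies top dominance for women, then the men-proposing deferred acceptance rule restricted to this domain is stable and group strategy-proof: no profile in the domain, coalition of agents, and joint misreport within the domain can make every coalition member strictly better off. -/
variable {M W : Type*}

namespace LO
variable {α : Type*} (L : LinearOrder α)
lemma lerefl (a : α) : L.le a a := letI := L; le_refl a
lemma letrans {a b c : α} (h : L.le a b) (h2 : L.le b c) : L.le a c := letI := L; le_trans h h2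
lemma notle {a b : α} : ¬ L.le a b ↔ L.lt b a := letI := L; not_le
lemma notlt {a b : α} : ¬ L.lt a b ↔ L.le b a := letI := L; not_lt
lemma ltofleoflt {a b c : α} (h : L.le a b) (h2 : L.lt b c) : L.lt a c := letI := L; lt_of_le_of_lt h h2
lemma ltofltofle {a b c : α} (h : L.lt a b) (h2 : L.le b c) : L.lt a c := letI := L; lt_of_lt_of_le h h2
lemma lttrans {a b c : α} (h : L.lt a b) (h2 : L.lt b c) : L.lt a c := letI := L; lt_trans h h2
lemma ltirrefl (a : α) : ¬ L.lt a a := letI := L; lt_irrefl a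
lemma ltasymm {a b : α} (h : L.lt a b) : ¬ L.lt b a := letI := L; lt_asymm h
lemma leantisymm {a b : α} (h : L.le a b) (h2 : L.le b a) : a = b := letI := L; le_antisymm h h2
lemma ltoflene {a b : α} (h : L.le a b) (h2 : a ≠ b) : L.lt a b := letI := L; lt_of_le_of_ne h h2
lemma neoflt {a b : α} (h : L.lt a b) : a ≠ b := letI := L; ne_of_lt h
lemma leoflt {a b : α} (h : L.lt a b) : L.le a b := letI := L; le_of_lt h
lemma letotal (a b : α) : L.le a b ∨ L.le b a := letI := L; le_total a b
lemma leofnotlt {a b : α} (h : ¬ L.lt a b) : L.le b a := (notlt L).mp h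
lemma lttricho (a b : α) : L.lt a b ∨ a = b ∨ L.lt b a := letI := L; lt_trichotomy a b
end LO

namespace DA
set_option linter.unusedSectionVars false
open Finset
attribute [local instance] Classical.propDecidable

variable {M W : Type*} [Fintype M] [Fintype W]

noncomputable def cand (R : Finset (M × W)) (m : M) : Finset (Option W) :=
  insert none ((Finset.univ.filter (fun w => (m, w) ∉ R)).image some)

lemma cand_ne (R : Finset (M × W)) (m : M) : (cand R m).Nonempty :=
  ⟨none, Finset.mem_insert_self _ _⟩

noncomputable def best (P : Profile M W) (R : Finset (M × W)) (m : M) : Option W :=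
  @Finset.max' _ (P.menPref m) (cand R m) (cand_ne R m)

lemma best_mem (P : Profile M W) (R : Finset (M × W)) (m : M) :
    best P R m ∈ cand R m := @Finset.max'_mem _ (P.menPref m) _ _

lemma le_best (P : Profile M W) {R : Finset (M × W)} {m : M} {o : Option W}
    (h : o ∈ cand R m) : (P.menPref m).le o (best P R m) :=
  @Finset.le_max' _ (P.menPref m) _ _ h

lemma none_mem_cand (R : Finset (M × W)) (m : M) : (none : Option W) ∈ cand R m :=
  Finset.mem_insert_self _ _

lemma some_mem_cand {R : Finset (M × W)} {m : M} {w : W} (h : (m, w) ∉ R) :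
    some w ∈ cand R m := by
  apply Finset.mem_insert_of_mem
  exact Finset.mem_image_of_mem some (by simpa using h)

lemma mem_cand {R : Finset (M × W)} {m : M} {o : Option W} (h : o ∈ cand R m) :
    o = none ∨ ∃ w, o = some w ∧ (m, w) ∉ R := by
  rcases Finset.mem_insert.mp h with h | h
  · exact Or.inl h
  · right
    rcases Finset.mem_image.mp h with ⟨w, hw, rfl⟩
    exact ⟨w, rfl, (Finset.mem_filter.mp hw).2⟩

lemma none_le_best (P : Profile M W) (R : Finset (M × W)) (m : M) :
    (P.menPref m).le none (best P R m) := le_best P (none_mem_cand R m)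

lemma best_notR {P : Profile M W} {R : Finset (M × W)} {m : M} {w : W}
    (h : best P R m = some w) : (m, w) ∉ R := by
  rcases mem_cand (best_mem P R m) with h' | ⟨w', h', hw'⟩
  · rw [h] at h'; cases h'
  · rw [h] at h'; cases h'; exact hw'

lemma above_best {P : Profile M W} {R : Finset (M × W)} {m : M} {w : W}
    (h : (P.menPref m).lt (best P R m) (some w)) : (m, w) ∈ R := by
  by_contra hc
  exact LO.ltirrefl _ _ (LO.ltofleoflt _ (le_best P (some_mem_cand hc)) h)

lemma cand_anti {R R' : Finset (M × W)} (h : R ⊆ R') (m : M) : cand R' m ⊆ cand R m := by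
  intro o ho
  rcases mem_cand ho with rfl | ⟨w, rfl, hw⟩
  · exact none_mem_cand R m
  · exact some_mem_cand (fun hc => hw (h hc))

lemma best_anti (P : Profile M W) {R R' : Finset (M × W)} (h : R ⊆ R') (m : M) :
    (P.menPref m).le (best P R' m) (best P R m) :=
  le_best P (cand_anti h m (best_mem P R' m))

noncomputable def acc (P : Profile M W) (R : Finset (M × W)) (w : W) : Option M :=
  @Finset.max' _ (P.womenPref w)
    (insert none ((Finset.univ.filter (fun m => best P R m = some w)).image some))
    ⟨none, Finset.mem_insert_self _ _⟩

lemma acc_spec (P : Profile M W) (R : Finset (M × W)) (w : W) :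
    acc P R w = none ∨ ∃ m, acc P R w = some m ∧ best P R m = some w := by
  have h := @Finset.max'_mem _ (P.womenPref w)
    (insert none ((Finset.univ.filter (fun m => best P R m = some w)).image some))
    ⟨none, Finset.mem_insert_self _ _⟩
  rcases Finset.mem_insert.mp h with h | h
  · exact Or.inl h
  · right
    rcases Finset.mem_image.mp h with ⟨m, hm, hm2⟩
    exact ⟨m, hm2.symm, (Finset.mem_filter.mp hm).2⟩

lemma le_acc (P : Profile M W) {R : Finset (M × W)} {m : M} {w : W}
    (h : best P R m = some w) : (P.womenPref w).le (some m) (acc P R w) := by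
  apply @Finset.le_max' _ (P.womenPref w)
  apply Finset.mem_insert_of_mem
  exact Finset.mem_image_of_mem some (Finset.mem_filter.mpr ⟨Finset.mem_univ m, h⟩)

lemma none_le_acc (P : Profile M W) (R : Finset (M × W)) (w : W) :
    (P.womenPref w).le none (acc P R w) :=
  @Finset.le_max' _ (P.womenPref w) _ _ (Finset.mem_insert_self _ _)

noncomputable def step (P : Profile M W) (R : Finset (M × W)) : Finset (M × W) :=
  R ∪ Finset.univ.filter (fun p => best P R p.1 = some p.2 ∧ acc P R p.2 ≠ some p.1)

lemma mem_step {P : Profile M W} {R : Finset (M × W)} {m : M} {w : W} :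
    (m, w) ∈ step P R ↔ (m, w) ∈ R ∨ (best P R m = some w ∧ acc P R w ≠ some m) := by
  simp [step]

lemma sub_step (P : Profile M W) (R : Finset (M × W)) : R ⊆ step P R :=
  Finset.subset_union_left

lemma acc_keep {P : Profile M W} {R : Finset (M × W)} {m : M} {w : W}
    (h : acc P R w = some m) : best P (step P R) m = some w := by
  rcases acc_spec P R w with h0 | ⟨m', hm', hb⟩
  · rw [h] at h0; cases h0
  · rw [h] at hm'; cases hm'
    have hnotin : (m, w) ∉ step P R := by
      intro hc
      rcases mem_step.mp hc with hc | hc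
      · exact best_notR hb hc
      · exact hc.2 h
    have h1 : (P.menPref m).le (some w) (best P (step P R) m) := le_best P (some_mem_cand hnotin)
    have h2 : (P.menPref m).le (best P (step P R) m) (some w) := by
      have := best_anti P (sub_step P R) m
      rwa [hb] at this
    exact (LO.leantisymm _ h2 h1)

lemma acc_mono (P : Profile M W) (R : Finset (M × W)) (w : W) :
    (P.womenPref w).le (acc P R w) (acc P (step P R) w) := by
  rcases acc_spec P R w with h | ⟨m, hm, _⟩
  · rw [h]; exact none_le_acc P _ w
  · rw [hm]; exact le_acc P (acc_keep hm)

noncomputable def st (P : Profile M W) (k : ℕ) : Finset (M × W) := (step P)^[k] ∅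

lemma st_succ (P : Profile M W) (k : ℕ) : st P (k + 1) = step P (st P k) :=
  Function.iterate_succ_apply' _ _ _

lemma st_zero (P : Profile M W) : st P 0 = ∅ := rfl

lemma st_mono (P : Profile M W) {i j : ℕ} (h : i ≤ j) : st P i ⊆ st P j := by
  induction j with
  | zero => cases Nat.le_zero.mp h; exact fun x hx => hx
  | succ j ih =>
    rcases Nat.le_succ_iff_eq_or_le.mp h with rfl | h'
    · exact fun x hx => hx
    · exact fun x hx => (st_succ P j) ▸ sub_step P (st P j) (ih h' hx)

lemma inv_entry (P : Profile M W) : ∀ k m w, (m, w) ∈ st P (k + 1) →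
    (P.womenPref w).lt (some m) (acc P (st P k) w) := by
  intro k
  induction k with
  | zero =>
    intro m w h
    rw [st_succ] at h
    rcases mem_step.mp h with h | ⟨hb, hne⟩
    · cases h
    · exact LO.ltoflene _ (le_acc P hb) (fun hc => hne hc.symm)
  | succ k ih =>
    intro m w h
    rw [st_succ] at h
    rcases mem_step.mp h with h | ⟨hb, hne⟩
    · exact LO.ltofltofle _ (ih m w h) (by rw [st_succ]; exact acc_mono P (st P k) w)
    · exact LO.ltoflene _ (le_acc P hb) (fun hc => hne hc.symm)

lemma exists_fix (P : Profile M W) : ∃ k ≤ Fintype.card (M × W), step P (st P k) = st P k := by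
  by_contra hc
  push_neg at hc
  have key : ∀ k, k ≤ Fintype.card (M × W) + 1 → k ≤ (st P k).card := by
    intro k
    induction k with
    | zero => intro _; exact Nat.zero_le _
    | succ k ih =>
      intro hk
      have hk' : k ≤ Fintype.card (M × W) := Nat.lt_succ_iff.mp (Nat.lt_of_lt_of_le (Nat.lt_succ_self k) hk)
      have hne := hc k hk'
      have hss : st P k ⊂ st P (k + 1) := by
        rw [st_succ]
        exact Finset.ssubset_iff_subset_ne.mpr ⟨sub_step P _, fun h => hne h.symm⟩
      exact Nat.lt_of_le_of_lt (ih (Nat.le_of_succ_le hk)) (Finset.card_lt_card hss)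
  have h1 := key (Fintype.card (M × W) + 1) (le_refl _)
  have h2 : (st P (Fintype.card (M × W) + 1)).card ≤ Fintype.card (M × W) :=
    (Finset.card_le_univ _).trans (le_of_eq (Finset.card_univ))
  omega

noncomputable def RN (P : Profile M W) : Finset (M × W) := st P (Fintype.card (M × W))

lemma RN_fix (P : Profile M W) : step P (RN P) = RN P := by
  obtain ⟨k, hk, hfix⟩ := exists_fix P
  have hstay : ∀ i, st P (k + i) = st P k := by
    intro i
    induction i with
    | zero => rfl
    | succ i ih => rw [← Nat.add_assoc, st_succ, ih, hfix]
  have : RN P = st P k := by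
    have := hstay (Fintype.card (M × W) - k)
    rwa [Nat.add_sub_cancel' hk] at this
  rw [this, hfix, ← this]

noncomputable def damatch (P : Profile M W) : Matching M W where
  menMatch m := best P (RN P) m
  womenMatch w := acc P (RN P) w
  consistent := by
    intro m w
    constructor
    · intro h
      by_contra hne
      have hin : (m, w) ∈ step P (RN P) := mem_step.mpr (Or.inr ⟨h, hne⟩)
      rw [RN_fix] at hin
      exact best_notR h hin
    · intro h
      have h' : acc P (RN P) w = some m := h
      show best P (RN P) m = some w
      rcases acc_spec P (RN P) w with h0 | ⟨m', hm', hb⟩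
      · rw [h'] at h0; cases h0
      · rw [h'] at hm'; cases hm'; exact hb

lemma damatch_men (P : Profile M W) (m : M) : (damatch P).menMatch m = best P (RN P) m := rfl
lemma damatch_women (P : Profile M W) (w : W) : (damatch P).womenMatch w = acc P (RN P) w := rfl

lemma inv_RN (P : Profile M W) {m : M} {w : W} (h : (m, w) ∈ RN P) :
    (P.womenPref w).lt (some m) (acc P (RN P) w) := by
  have h2 : (m, w) ∈ st P (Fintype.card (M × W) + 1) :=
    st_mono P (Nat.le_succ _) h
  exact inv_entry P _ m w h2

theorem damatch_stable (P : Profile M W) : Stable (damatch P) P := by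
  refine ⟨⟨fun m => none_le_best P (RN P) m, fun w => none_le_acc P (RN P) w⟩, ?_⟩
  intro m w ⟨h1, h2⟩
  have hr : (m, w) ∈ RN P := above_best h1
  exact LO.ltasymm _ (inv_RN P hr) h2

lemma opt_inv (P : Profile M W) (ν : Matching M W) (hν : Stable ν P) :
    ∀ k m w, (m, w) ∈ st P k → ν.menMatch m ≠ some w := by
  intro k
  induction k with
  | zero => intro m w h; cases h
  | succ k ih =>
    intro m w hmw heq
    rw [st_succ] at hmw
    rcases mem_step.mp hmw with h | ⟨hb, hne⟩
    · exact ih m w h heq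
    · have hwm : ν.womenMatch w = some m := (ν.consistent m w).mp heq
      have hlt : (P.womenPref w).lt (some m) (acc P (st P k) w) :=
        LO.ltoflene _ (le_acc P hb) (fun hc => hne hc.symm)
      rcases acc_spec P (st P k) w with h0 | ⟨m'', hm'', hb''⟩
      · rw [h0] at hlt
        have hIR : (P.womenPref w).le none (some m) := hwm ▸ hν.1.2 w
        exact LO.ltirrefl _ _ (LO.ltofleoflt _ hIR hlt)
      · rw [hm''] at hlt
        have hmm : m'' ≠ m := fun hc => hne (hc ▸ hm'')
        apply hν.2 m'' w
        constructor
        · -- man side: ν.menMatch m'' < some w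
          rcases LO.lttricho (P.menPref m'') (ν.menMatch m'') (some w) with h' | h' | h'
          · exact h'
          · exact absurd (((ν.consistent m'' w).mp h').symm.trans hwm) (by simpa using hmm)
          · cases hm : ν.menMatch m'' with
            | none =>
              rw [hm] at h'
              have : (P.menPref m'').le none (some w) := hb'' ▸ none_le_best P (st P k) m''
              exact absurd (LO.ltofleoflt _ this h') (LO.ltirrefl _ _)
            | some w' =>
              rw [hm] at h'
              have hr : (m'', w') ∈ st P k := above_best (hb'' ▸ h' : (P.menPref m'').lt (best P (st P k) m'') (some w'))
              exact absurd hm (ih m'' w' hr)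
        · rw [hwm]; exact hlt

theorem damatch_opt (P : Profile M W) : MenOptimalStable (damatch P) P := by
  refine ⟨damatch_stable P, ?_⟩
  intro ν hν m
  rcases LO.lttricho (P.menPref m) (ν.menMatch m) ((damatch P).menMatch m) with h | h | h
  · exact LO.leoflt _ h
  · exact h ▸ LO.lerefl _ _
  · exfalso
    cases hm : ν.menMatch m with
    | none =>
      rw [hm] at h
      exact LO.ltirrefl _ _ (LO.ltofleoflt _ (none_le_best P (RN P) m) h)
    | some w =>
      rw [hm] at h
      exact opt_inv P ν hν _ m w (above_best h) hm

lemma matching_ext {μ₁ μ₂ : Matching M W} (h : ∀ m, μ₁.menMatch m = μ₂.menMatch m) :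
    μ₁ = μ₂ := by
  have hw : ∀ w, μ₁.womenMatch w = μ₂.womenMatch w := by
    intro w
    cases h1 : μ₁.womenMatch w with
    | some m =>
      have := (μ₁.consistent m w).mpr h1
      rw [h m] at this
      exact ((μ₂.consistent m w).mp this).symm
    | none =>
      cases h2 : μ₂.womenMatch w with
      | none => rfl
      | some m =>
        have := (μ₂.consistent m w).mpr h2
        rw [← h m] at this
        rw [(μ₁.consistent m w).mp this] at h1
        cases h1
  cases μ₁; cases μ₂
  simp only [Matching.mk.injEq]
  exact ⟨funext h, funext hw⟩

lemma menopt_unique {P : Profile M W} {μ₁ μ₂ : Matching M W}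
    (h1 : MenOptimalStable μ₁ P) (h2 : MenOptimalStable μ₂ P) : μ₁ = μ₂ :=
  matching_ext (fun m => LO.leantisymm _ (h2.2 μ₁ h1.1 m) (h1.2 μ₂ h2.1 m))

lemma mpda_opt (P : Profile M W) : MenOptimalStable (mpda P) P := by
  have h : ∃ μ : Matching M W, MenOptimalStable μ P := ⟨damatch P, damatch_opt P⟩
  unfold mpda
  rw [dif_pos h]
  exact h.choose_spec

lemma mpda_eq (P : Profile M W) : mpda P = damatch P :=
  menopt_unique (mpda_opt P) (damatch_opt P)

end DA
namespace DA
set_option linter.unusedSectionVars false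
open Finset
attribute [local instance] Classical.propDecidable

variable {M W : Type*} [Fintype M] [Fintype W]

lemma exists_entry {P : Profile M W} {p : M × W} {n : ℕ} (h : p ∈ st P n) :
    ∃ k, k < n ∧ p ∈ st P (k + 1) ∧ p ∉ st P k := by
  induction n with
  | zero => cases h
  | succ n ih =>
    by_cases hn : p ∈ st P n
    · obtain ⟨k, h1, h2, h3⟩ := ih hn
      exact ⟨k, Nat.lt_succ_of_lt h1, h2, h3⟩
    · exact ⟨n, Nat.lt_succ_self n, h, hn⟩

lemma blocking_lemma (P : Profile M W) (ν : Matching M W) (B : Finset M) (WB : Finset W)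
    (hcard : WB.card = B.card)
    (hne : B.Nonempty)
    (hBbetter : ∀ m ∈ B, (P.menPref m).lt ((damatch P).menMatch m) (ν.menMatch m))
    (hmB : ∀ m ∈ B, ∃ w, w ∈ WB ∧ ν.menMatch m = some w)
    (hwB : ∀ w ∈ WB, ∃ m, m ∈ B ∧ ν.womenMatch w = some m)
    (hIR : ∀ w ∈ WB, (P.womenPref w).le none (ν.womenMatch w))
    (hnB : ∀ m, m ∉ B → (P.menPref m).le (ν.menMatch m) ((damatch P).menMatch m)) :
    ∃ m w, m ∉ B ∧ w ∈ WB ∧ Blocks m w ν P := by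
  by_contra hcon
  push_neg at hcon
  set N := Fintype.card (M × W) with hN
  have hRNst : RN P = st P N := rfl
  -- every pair (m, ν m) with m ∈ B is eventually rejected
  have hpairR : ∀ m ∈ B, ∀ w, ν.menMatch m = some w → (m, w) ∈ RN P := by
    intro m hm w hw
    apply above_best (P := P)
    have := hBbetter m hm
    rw [hw] at this
    exact this
  set pred : ℕ → Prop :=
    fun k => ∃ m, m ∈ B ∧ ∃ w, ν.menMatch m = some w ∧ (m, w) ∈ st P (k + 1) ∧ (m, w) ∉ st P k
    with hpreddef
  obtain ⟨m₀, hm₀⟩ := hne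
  obtain ⟨w₀, hw₀WB, hw₀⟩ := hmB m₀ hm₀
  obtain ⟨k₀, hk₀N, hk₀1, hk₀2⟩ := exists_entry (hRNst ▸ hpairR m₀ hm₀ w₀ hw₀)
  set kk := Nat.findGreatest pred N with hkk
  have hkkN : kk ≤ N := Nat.findGreatest_le N
  have hpred : pred kk :=
    Nat.findGreatest_spec (le_of_lt hk₀N) ⟨m₀, hm₀, w₀, hw₀, hk₀1, hk₀2⟩
  have hmaxx : ∀ j, kk < j → j ≤ N → ¬ pred j := fun j h1 h2 => Nat.findGreatest_is_greatest h1 h2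
  -- every WB pair has entered by step kk+1
  have hWpairs : ∀ w ∈ WB, ∃ m, m ∈ B ∧ ν.womenMatch w = some m ∧ (m, w) ∈ st P (kk + 1) := by
    intro w hw
    obtain ⟨m, hmB', hνw⟩ := hwB w hw
    have hνm : ν.menMatch m = some w := (ν.consistent m w).mpr hνw
    obtain ⟨k, hkN, hk1, hk2⟩ := exists_entry (hRNst ▸ hpairR m hmB' w hνm)
    have hkkk : k ≤ kk := by
      by_contra hgt
      exact hmaxx k (lt_of_not_ge hgt) (le_of_lt hkN) ⟨m, hmB', w, hνm, hk1, hk2⟩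
    exact ⟨m, hmB', hνw, st_mono P (Nat.succ_le_succ hkkk) hk1⟩
  -- each WB woman currently holds a B-man
  have hacc : ∀ w ∈ WB, ∃ m', acc P (st P kk) w = some m' ∧ m' ∈ B ∧ best P (st P kk) m' = some w := by
    intro w hw
    obtain ⟨m, hmB', hνw, hpair⟩ := hWpairs w hw
    have hlt : (P.womenPref w).lt (some m) (acc P (st P kk) w) := inv_entry P kk m w hpair
    rcases acc_spec P (st P kk) w with h0 | ⟨m', hm', hb'⟩
    · rw [h0] at hlt
      have hIR' := hIR w hw
      rw [hνw] at hIR'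
      exact absurd (LO.ltofleoflt _ hIR' hlt) (LO.ltirrefl _ _)
    · refine ⟨m', hm', ?_, hb'⟩
      by_contra hm'B
      apply hcon m' w hm'B hw
      rw [hm'] at hlt
      have hmne : m ≠ m' := by
        intro hc; rw [hc] at hlt; exact LO.ltirrefl _ _ hlt
      constructor
      · -- man side : ν m' < some w
        have h1 : (P.menPref m').le (ν.menMatch m') ((damatch P).menMatch m') := hnB m' hm'B
        have h2 : (P.menPref m').le ((damatch P).menMatch m') (some w) := by
          rw [damatch_men, hRNst, ← hb']
          exact best_anti P (st_mono P hkkN) m'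
        refine LO.ltoflene _ (LO.letrans _ h1 h2) ?_
        intro hceq
        have := (ν.consistent m' w).mp hceq
        rw [hνw] at this
        exact hmne (Option.some_injective _ this)
      · rw [hνw]; exact hlt
  -- extract the rejected man m*
  obtain ⟨ms, hmsB, ws, hνms, hin, hout⟩ := hpred
  have hstep : best P (st P kk) ms = some ws ∧ acc P (st P kk) ws ≠ some ms := by
    rw [st_succ] at hin
    rcases mem_step.mp hin with h | h
    · exact absurd h hout
    · exact h
  -- the injection
  classical
  set f : W → M := fun w => if h : w ∈ WB then (hacc w h).choose else m₀ with hf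
  have hfB : ∀ w ∈ WB, f w ∈ B := by
    intro w hw; rw [hf]; simp only [dif_pos hw]; exact (hacc w hw).choose_spec.2.1
  have hfbest : ∀ w ∈ WB, best P (st P kk) (f w) = some w := by
    intro w hw; rw [hf]; simp only [dif_pos hw]; exact (hacc w hw).choose_spec.2.2
  have hfacc : ∀ w ∈ WB, acc P (st P kk) w = some (f w) := by
    intro w hw; rw [hf]; simp only [dif_pos hw]; exact (hacc w hw).choose_spec.1
  have hfne : ∀ w ∈ WB, f w ≠ ms := by
    intro w hw hc
    have h1 := hfbest w hw
    rw [hc, hstep.1] at h1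
    have hww : ws = w := Option.some_injective _ h1
    apply hstep.2
    rw [hww, ← hc]
    exact hfacc w hw
  have hinj : Set.InjOn f WB := by
    intro w1 h1 w2 h2 heq
    have b1 := hfbest w1 h1
    have b2 := hfbest w2 h2
    rw [heq] at b1
    rw [b1] at b2
    exact (Option.some_injective _ b2)
  have hmaps : ∀ w ∈ WB, f w ∈ B.erase ms := by
    intro w hw
    exact Finset.mem_erase.mpr ⟨hfne w hw, hfB w hw⟩
  have hcardle : WB.card ≤ (B.erase ms).card := Finset.card_le_card_of_injOn f hmaps hinj
  have herase : (B.erase ms).card = B.card - 1 := Finset.card_erase_of_mem hmsB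
  have hpos : 0 < B.card := Finset.card_pos.mpr ⟨m₀, hm₀⟩
  omega

end DA
set_option maxHeartbeats 1000000 in
/-- on a domain satisfying top dominance for women, the MPDA rule
is stable and group strategy-proof. -/
theorem mpda_gsp_of_top_dominance [Fintype M] [Fintype W]
    [DecidableEq M] [DecidableEq W] (D : Domain M W)
    (hTD : TopDominanceWomen D) :
    StableOn D mpda ∧ GroupStrategyProofOn D mpda := by
  classical
  constructor
  · intro P _
    exact (DA.mpda_opt P).1
  · rintro ⟨P, Q, Sm, Sw, hne, hPD, hQD, hQm, hQw, hSm, hSw⟩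
    simp only [DA.mpda_eq] at hSm hSw
    set μ : Matching M W := DA.damatch P with hμdef
    set ν : Matching M W := DA.damatch Q with hνdef
    have hμ : MenOptimalStable μ P := DA.damatch_opt P
    have hν : MenOptimalStable ν Q := DA.damatch_opt Q
    have hμIRm : ∀ m, (P.menPref m).le none (μ.menMatch m) := hμ.1.1.1
    have hμIRw : ∀ w, (P.womenPref w).le none (μ.womenMatch w) := hμ.1.1.2
    have hμNB : ∀ m w, ¬ Blocks m w μ P := hμ.1.2
    have hνIRm : ∀ m, (Q.menPref m).le none (ν.menMatch m) := hν.1.1.1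
    have hνIRw : ∀ w, (Q.womenPref w).le none (ν.womenMatch w) := hν.1.1.2
    have hνNB : ∀ m w, ¬ Blocks m w ν Q := hν.1.2
    set B : Finset M :=
      Finset.univ.filter (fun m => (P.menPref m).lt (μ.menMatch m) (ν.menMatch m)) with hBdef
    have hSmB : ∀ m ∈ Sm, m ∈ B := fun m hm =>
      Finset.mem_filter.mpr ⟨Finset.mem_univ m, hSm m hm⟩
    have hBlt : ∀ m ∈ B, (P.menPref m).lt (μ.menMatch m) (ν.menMatch m) :=
      fun m hm => (Finset.mem_filter.mp hm).2
    by_cases hBne : B.Nonempty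
    · -- CASE I : some man strictly improves
      have factB : ∀ m, m ∈ B → ∃ w, ν.menMatch m = some w ∧ w ∉ Sw ∧
          (P.womenPref w).lt (some m) (μ.womenMatch w) ∧
          (P.womenPref w).le none (some m) := by
        intro m hm
        have hmlt := hBlt m hm
        have hnn : (P.menPref m).lt none (ν.menMatch m) :=
          LO.ltofleoflt _ (hμIRm m) hmlt
        cases hνm : ν.menMatch m with
        | none => rw [hνm] at hnn; exact absurd hnn (LO.ltirrefl _ _)
        | some w =>
          rw [hνm] at hmlt
          have hNB := hμNB m w
          simp only [Blocks, not_and] at hNB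
          have hle : (P.womenPref w).le (some m) (μ.womenMatch w) :=
            LO.leofnotlt _ (hNB hmlt)
          have hne2 : (some m : Option M) ≠ μ.womenMatch w := by
            intro hc
            have : μ.menMatch m = some w := (μ.consistent m w).mpr hc.symm
            rw [this] at hmlt
            exact LO.ltirrefl _ _ hmlt
          have hlt2 : (P.womenPref w).lt (some m) (μ.womenMatch w) := LO.ltoflene _ hle hne2
          have hwS : w ∉ Sw := by
            intro hwS
            have h1 := hSw w hwS
            have h2 : ν.womenMatch w = some m := (ν.consistent m w).mp hνm
            rw [h2] at h1
            exact LO.ltasymm _ hlt2 h1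
          have hacc : (P.womenPref w).le none (some m) := by
            have h2 : ν.womenMatch w = some m := (ν.consistent m w).mp hνm
            have := hνIRw w
            rw [h2, hQw w hwS] at this
            exact this
          exact ⟨w, rfl, hwS, hlt2, hacc⟩
      choose fB hfB1 hfB2 hfB3 hfB4 using factB
      set WB : Finset W :=
        Finset.univ.filter (fun w => ∃ m ∈ B, ν.menMatch m = some w) with hWBdef
      have hmWB : ∀ m (hm : m ∈ B), fB m hm ∈ WB := fun m hm =>
        Finset.mem_filter.mpr ⟨Finset.mem_univ _, ⟨m, hm, hfB1 m hm⟩⟩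
      obtain ⟨m₀, hm₀⟩ := hBne
      set w₀ : W := fB m₀ hm₀ with hw₀def
      have hwB : ∀ w ∈ WB, ∃ m, m ∈ B ∧ ν.womenMatch w = some m := by
        intro w hw
        obtain ⟨m, hm, hm2⟩ := (Finset.mem_filter.mp hw).2
        exact ⟨m, hm, (ν.consistent m w).mp hm2⟩
      have hWBeq : ∀ w ∈ WB, ∀ m (hm : m ∈ B), ν.menMatch m = some w → fB m hm = w := by
        intro w _ m hm hνm
        have := hfB1 m hm
        rw [hνm] at this
        exact (Option.some_injective _ this.symm)
      have hcard : WB.card = B.card := by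
        apply le_antisymm
        · choose eB he1 he2 using hwB
          apply Finset.card_le_card_of_injOn (fun w => if h : w ∈ WB then eB w h else m₀)
          · intro w hw
            simp only [dif_pos (Finset.mem_coe.mp hw)]
            exact he1 w hw
          · intro w1 h1' w2 h2' heq
            have h1 : w1 ∈ WB := h1'
            have h2 : w2 ∈ WB := h2'
            simp only [dif_pos h1, dif_pos h2] at heq
            have e1 : ν.menMatch (eB w1 h1) = some w1 := (ν.consistent _ _).mpr (he2 w1 h1)
            have e2 : ν.menMatch (eB w2 h2) = some w2 := (ν.consistent _ _).mpr (he2 w2 h2)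
            rw [heq, e2] at e1
            exact (Option.some_injective _ e1.symm)
        · apply Finset.card_le_card_of_injOn (fun m => if h : m ∈ B then fB m h else w₀)
          · intro m hm
            simp only [dif_pos (Finset.mem_coe.mp hm)]
            exact hmWB m hm
          · intro m1 h1' m2 h2' heq
            have h1 : m1 ∈ B := h1'
            have h2 : m2 ∈ B := h2'
            simp only [dif_pos h1, dif_pos h2] at heq
            have e1 : ν.womenMatch (fB m1 h1) = some m1 := (ν.consistent _ _).mp (hfB1 m1 h1)
            have e2 : ν.womenMatch (fB m2 h2) = some m2 := (ν.consistent _ _).mp (hfB1 m2 h2)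
            rw [heq, e2] at e1
            exact (Option.some_injective _ e1.symm)
      have hIRWB : ∀ w ∈ WB, (P.womenPref w).le none (ν.womenMatch w) := by
        intro w hw
        obtain ⟨m, hm, hm2⟩ := hwB w hw
        rw [hm2]
        have heqw : fB m hm = w := hWBeq w hw m hm ((ν.consistent m w).mpr hm2)
        have := hfB4 m hm
        rwa [heqw] at this
      have hnB : ∀ m, m ∉ B → (P.menPref m).le (ν.menMatch m) (μ.menMatch m) := by
        intro m hm
        apply LO.leofnotlt
        intro hc
        exact hm (Finset.mem_filter.mpr ⟨Finset.mem_univ m, hc⟩)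
      obtain ⟨mh, wh, hmhB, hwhWB, hblk⟩ :=
        DA.blocking_lemma P ν B WB hcard ⟨m₀, hm₀⟩ hBlt
          (fun m hm => ⟨fB m hm, hmWB m hm, hfB1 m hm⟩) hwB hIRWB hnB
      have hmhSm : mh ∉ Sm := fun hc => hmhB (hSmB mh hc)
      have hwhSw : wh ∉ Sw := by
        obtain ⟨m, hm, hm2⟩ := hwB wh hwhWB
        have heqw : fB m hm = wh := hWBeq wh hwhWB m hm ((ν.consistent m wh).mpr hm2)
        have := hfB2 m hm
        rwa [heqw] at this
      apply hνNB mh wh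
      constructor
      · rw [hQm mh hmhSm]; exact hblk.1
      · rw [hQw wh hwhSw]; exact hblk.2
    · -- CASE II : no man improves
      have hnB : ∀ m, m ∉ B := fun m hm => hBne ⟨m, hm⟩
      have hallmen : ∀ m, (P.menPref m).le (ν.menMatch m) (μ.menMatch m) := by
        intro m
        apply LO.leofnotlt
        intro hc
        exact hnB m (Finset.mem_filter.mpr ⟨Finset.mem_univ m, hc⟩)
      have hSmE : ∀ m, m ∉ Sm := fun m hm => hnB m (hSmB m hm)
      have hQmeq : ∀ m, Q.menPref m = P.menPref m := fun m => hQm m (hSmE m)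
      have hSwne : Sw.Nonempty := by
        rcases hne with ⟨m, hm⟩ | h
        · exact absurd hm (hSmE m)
        · exact h
      set C : Finset M :=
        Finset.univ.filter (fun m => (P.menPref m).lt (ν.menMatch m) (μ.menMatch m)) with hCdef
      have hClt : ∀ m ∈ C, (P.menPref m).lt (ν.menMatch m) (μ.menMatch m) :=
        fun m hm => (Finset.mem_filter.mp hm).2
      have hCeq : ∀ m, m ∉ C → ν.menMatch m = μ.menMatch m := by
        intro m hm
        refine LO.leantisymm _ (hallmen m) (LO.leofnotlt _ ?_)
        intro hc
        exact hm (Finset.mem_filter.mpr ⟨Finset.mem_univ m, hc⟩)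
      have factC : ∀ m, m ∈ C → ∃ w, μ.menMatch m = some w := by
        intro m hm
        have h1 := hνIRm m
        rw [hQmeq m] at h1
        have h2 : (P.menPref m).lt none (μ.menMatch m) := LO.ltofleoflt _ h1 (hClt m hm)
        cases hμm : μ.menMatch m with
        | none => rw [hμm] at h2; exact absurd h2 (LO.ltirrefl _ _)
        | some w => exact ⟨w, rfl⟩
      set WC : Finset W :=
        Finset.univ.filter (fun w => ∃ m ∈ C, μ.menMatch m = some w) with hWCdef
      have hWCμ : ∀ w m, m ∈ C → μ.menMatch m = some w → w ∈ WC := fun w m hm h =>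
        Finset.mem_filter.mpr ⟨Finset.mem_univ _, ⟨m, hm, h⟩⟩
      -- the facts about women in WC
      have factWC : ∀ w, w ∈ WC → ∃ mm : M × M,
          μ.womenMatch w = some mm.1 ∧ mm.1 ∈ C ∧
          ν.womenMatch w = some mm.2 ∧ mm.2 ∈ C ∧
          (Q.womenPref w).lt (μ.womenMatch w) (ν.womenMatch w) ∧
          (P.womenPref w).lt (μ.womenMatch w) (ν.womenMatch w) := by
        intro w hw
        obtain ⟨m, hmC, hμm⟩ := (Finset.mem_filter.mp hw).2
        have hμwm : μ.womenMatch w = some m := (μ.consistent m w).mp hμm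
        -- (i) Q-improvement for w
        have hQlt : (Q.womenPref w).lt (μ.womenMatch w) (ν.womenMatch w) := by
          have hman : (Q.menPref m).lt (ν.menMatch m) (some w) := by
            rw [hQmeq m, ← hμm]
            exact hClt m hmC
          have hNB := hνNB m w
          simp only [Blocks, not_and] at hNB
          have hle : (Q.womenPref w).le (some m) (ν.womenMatch w) :=
            LO.leofnotlt _ (hNB hman)
          have hne2 : (some m : Option M) ≠ ν.womenMatch w := by
            intro hc
            have : ν.menMatch m = some w := (ν.consistent m w).mpr hc.symm
            rw [this] at hman
            exact LO.ltirrefl _ _ hman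
          rw [hμwm]
          exact LO.ltoflene _ hle hne2
        -- (ii) P-improvement for w
        have hPlt : (P.womenPref w).lt (μ.womenMatch w) (ν.womenMatch w) := by
          by_cases hwS : w ∈ Sw
          · exact hSw w hwS
          · rw [← hQw w hwS]; exact hQlt
        -- (iii) w is matched under ν, to a man of C
        have hνsome : ∃ m'', ν.womenMatch w = some m'' := by
          cases hν0 : ν.womenMatch w with
          | none =>
            rw [hν0, hμwm] at hPlt
            have := hμIRw w
            rw [hμwm] at this
            exact absurd (LO.ltofleoflt _ this hPlt) (LO.ltirrefl _ _)
          | some m'' => exact ⟨m'', rfl⟩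
        obtain ⟨m'', hνwm⟩ := hνsome
        have hm''ne : m'' ≠ m := by
          intro hc
          rw [hc] at hνwm
          rw [hνwm, hμwm] at hPlt
          exact LO.ltirrefl _ _ hPlt
        have hm''C : m'' ∈ C := by
          have hNB := hμNB m'' w
          simp only [Blocks, not_and] at hNB
          have hwoman : (P.womenPref w).lt (μ.womenMatch w) (some m'') := by
            rw [← hνwm]; exact hPlt
          have hman : ¬ (P.menPref m'').lt (μ.menMatch m'') (some w) := by
            intro hc
            exact (hNB hc) hwoman
          have hle : (P.menPref m'').le (some w) (μ.menMatch m'') := LO.leofnotlt _ hman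
          have hne2 : (some w : Option W) ≠ μ.menMatch m'' := by
            intro hc
            have : μ.womenMatch w = some m'' := (μ.consistent m'' w).mp hc.symm
            rw [hμwm] at this
            exact hm''ne (Option.some_injective _ this).symm
          have hlt : (P.menPref m'').lt (some w) (μ.menMatch m'') := LO.ltoflene _ hle hne2
          have hνm'' : ν.menMatch m'' = some w := (ν.consistent m'' w).mpr hνwm
          refine Finset.mem_filter.mpr ⟨Finset.mem_univ _, ?_⟩
          rw [hνm'']
          exact hlt
        exact ⟨(m, m''), hμwm, hmC, hνwm, hm''C, hQlt, hPlt⟩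
      choose fW hfW1 hfW2 hfW3 hfW4 hfW5 hfW6 using factWC
      -- C is nonempty
      have hCne : C.Nonempty := by
        obtain ⟨w₀, hw₀S⟩ := hSwne
        have h1 := hSw w₀ hw₀S
        have hνsome : ∃ mt0, ν.womenMatch w₀ = some mt0 := by
          cases hν0 : ν.womenMatch w₀ with
          | none =>
            rw [hν0] at h1
            exact absurd (LO.ltofleoflt _ (hμIRw w₀) h1) (LO.ltirrefl _ _)
          | some mt0 => exact ⟨mt0, rfl⟩
        obtain ⟨mt0, hνmt0⟩ := hνsome
        have hNB := hμNB mt0 w₀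
        simp only [Blocks, not_and] at hNB
        have hwoman : (P.womenPref w₀).lt (μ.womenMatch w₀) (some mt0) := by
          rw [← hνmt0]; exact h1
        have hle : (P.menPref mt0).le (some w₀) (μ.menMatch mt0) :=
          LO.leofnotlt _ (fun hc => (hNB hc) hwoman)
        have hne2 : (some w₀ : Option W) ≠ μ.menMatch mt0 := by
          intro hc
          have : μ.womenMatch w₀ = some mt0 := (μ.consistent mt0 w₀).mp hc.symm
          rw [this] at h1
          rw [hνmt0] at h1
          exact LO.ltirrefl _ _ h1
        have hlt : (P.menPref mt0).lt (some w₀) (μ.menMatch mt0) := LO.ltoflene _ hle hne2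
        have hνmm : ν.menMatch mt0 = some w₀ := (ν.consistent mt0 w₀).mpr hνmt0
        refine ⟨mt0, Finset.mem_filter.mpr ⟨Finset.mem_univ _, ?_⟩⟩
        rw [hνmm]
        exact hlt
      obtain ⟨mC₀, hmC₀⟩ := hCne
      obtain ⟨wC₀, hwC₀⟩ := factC mC₀ hmC₀
      -- bijectivity bookkeeping : every man in C is ν-matched to a woman of WC
      choose gC hgC using factC
      have hgCWC : ∀ m (hm : m ∈ C), gC m hm ∈ WC := fun m hm => hWCμ _ m hm (hgC m hm)
      have hcardC : WC.card = C.card := by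
        apply le_antisymm
        · apply Finset.card_le_card_of_injOn
            (fun w => if h : w ∈ WC then (fW w h).2 else mC₀)
          · intro w hw
            simp only [dif_pos (Finset.mem_coe.mp hw)]
            exact hfW4 w hw
          · intro w1 h1' w2 h2' heq
            have h1 : w1 ∈ WC := h1'
            have h2 : w2 ∈ WC := h2'
            simp only [dif_pos h1, dif_pos h2] at heq
            have e1 : ν.menMatch (fW w1 h1).2 = some w1 := (ν.consistent _ _).mpr (hfW3 w1 h1)
            have e2 : ν.menMatch (fW w2 h2).2 = some w2 := (ν.consistent _ _).mpr (hfW3 w2 h2)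
            rw [heq, e2] at e1
            exact (Option.some_injective _ e1.symm)
        · apply Finset.card_le_card_of_injOn (fun m => if h : m ∈ C then gC m h else wC₀)
          · intro m hm
            simp only [dif_pos (Finset.mem_coe.mp hm)]
            exact hgCWC m hm
          · intro m1 h1' m2 h2' heq
            have h1 : m1 ∈ C := h1'
            have h2 : m2 ∈ C := h2'
            simp only [dif_pos h1, dif_pos h2] at heq
            have e1 : μ.womenMatch (gC m1 h1) = some m1 := (μ.consistent _ _).mp (hgC m1 h1)
            have e2 : μ.womenMatch (gC m2 h2) = some m2 := (μ.consistent _ _).mp (hgC m2 h2)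
            rw [heq, e2] at e1
            exact (Option.some_injective _ e1.symm)
      have hCν : ∀ m, m ∈ C → ∃ w, w ∈ WC ∧ ν.menMatch m = some w := by
        intro m hm
        -- the image of WC under w ↦ (fW w _).2 is all of C
        set e : W → M := fun w => if h : w ∈ WC then (fW w h).2 else mC₀ with hedef
        have hmaps : ∀ w ∈ WC, e w ∈ C := by
          intro w hw
          simp only [hedef, dif_pos hw]
          exact hfW4 w hw
        have hinj : Set.InjOn e WC := by
          intro w1 h1' w2 h2' heq
          have h1 : w1 ∈ WC := h1'
          have h2 : w2 ∈ WC := h2'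
          simp only [hedef, dif_pos h1, dif_pos h2] at heq
          have e1 : ν.menMatch (fW w1 h1).2 = some w1 := (ν.consistent _ _).mpr (hfW3 w1 h1)
          have e2 : ν.menMatch (fW w2 h2).2 = some w2 := (ν.consistent _ _).mpr (hfW3 w2 h2)
          rw [heq, e2] at e1
          exact (Option.some_injective _ e1.symm)
        have himg : WC.image e = C := by
          apply Finset.eq_of_subset_of_card_le
          · intro m' hm'
            obtain ⟨w, hw, rfl⟩ := Finset.mem_image.mp hm'
            exact hmaps w hw
          · rw [Finset.card_image_of_injOn hinj, hcardC]
        have : m ∈ WC.image e := himg.symm ▸ hm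
        obtain ⟨w, hw, hew⟩ := Finset.mem_image.mp this
        refine ⟨w, hw, ?_⟩
        have : ν.womenMatch w = some m := by
          rw [← hew]
          simp only [hedef, dif_pos hw]
          exact hfW3 w hw
        exact (ν.consistent m w).mpr this
      have hWCuniq : ∀ w m, m ∈ C → ν.menMatch m = some w → w ∈ WC := by
        intro w m hm hνm
        obtain ⟨w', hw', hνm'⟩ := hCν m hm
        rw [hνm] at hνm'
        rw [Option.some_injective _ hνm']
        exact hw'
      -- individual rationality of μ for WC women at Q (uses top dominance)
      have hIRQ : ∀ w, w ∈ WC → (Q.womenPref w).le none (μ.womenMatch w) := by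
        intro w hw
        by_cases hwS : w ∈ Sw
        · by_contra hc
          have hlt : (Q.womenPref w).lt (μ.womenMatch w) none := (LO.notle _).mp hc
          have hμwm := hfW1 w hw
          have hmC := hfW2 w hw
          have hνwm := hfW3 w hw
          apply hTD w (fW w hw).2 (μ.womenMatch w) none
          · refine ⟨P.womenPref w, hPD.2 w, ?_, ?_, hμIRw w⟩
            · have := hfW6 w hw
              rwa [hνwm] at this
            · refine LO.ltoflene _ (hμIRw w) ?_
              rw [hμwm]
              intro hceq
              cases hceq
          · refine ⟨Q.womenPref w, hQD.2 w, ?_, hlt, LO.lerefl _ _⟩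
            have := hνIRw w
            rw [hνwm] at this
            refine LO.ltoflene _ this ?_
            intro hceq
            cases hceq
        · rw [hQw w hwS]
          exact hμIRw w
      -- the hybrid matching
      set lam : Matching M W :=
        { menMatch := fun m => if m ∈ C then μ.menMatch m else ν.menMatch m,
          womenMatch := fun w => if w ∈ WC then μ.womenMatch w else ν.womenMatch w,
          consistent := by
            intro m w
            by_cases hm : m ∈ C <;> by_cases hw : w ∈ WC <;>
              simp only [if_pos, if_neg, hm, hw, if_true, if_false]
            · exact μ.consistent m w
            · constructor
              · intro h
                exact absurd (hWCμ w m hm h) hw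
              · intro h
                exact absurd (hWCuniq w m hm ((ν.consistent m w).mpr h)) hw
            · constructor
              · intro h
                have hνwm : ν.womenMatch w = some m := (ν.consistent m w).mp h
                have := hfW3 w hw
                rw [this] at hνwm
                have : m = (fW w hw).2 := (Option.some_injective _ hνwm).symm
                exact absurd (this ▸ hfW4 w hw) hm
              · intro h
                have := hfW1 w hw
                rw [this] at h
                have : m = (fW w hw).1 := (Option.some_injective _ h).symm
                exact absurd (this ▸ hfW2 w hw) hm
            · exact ν.consistent m w } with hlamdef
      have hlamm : ∀ m, lam.menMatch m = if m ∈ C then μ.menMatch m else ν.menMatch m := fun m => rfl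
      have hlamw : ∀ w, lam.womenMatch w = if w ∈ WC then μ.womenMatch w else ν.womenMatch w := fun w => rfl
      -- lam is stable at Q
      have hlamstable : Stable lam Q := by
        refine ⟨⟨?_, ?_⟩, ?_⟩
        · intro m
          rw [hlamm m]
          by_cases hm : m ∈ C
          · rw [if_pos hm, hQmeq m]
            exact hμIRm m
          · rw [if_neg hm]
            exact hνIRm m
        · intro w
          rw [hlamw w]
          by_cases hw : w ∈ WC
          · rw [if_pos hw]
            exact hIRQ w hw
          · rw [if_neg hw]
            exact hνIRw w
        · intro m w ⟨hb1, hb2⟩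
          rw [hlamm m] at hb1
          rw [hlamw w] at hb2
          have hb1' : (Q.menPref m).lt (ν.menMatch m) (some w) := by
            by_cases hm : m ∈ C
            · rw [if_pos hm] at hb1
              refine LO.ltofleoflt _ ?_ hb1
              rw [hQmeq m]
              exact LO.leoflt _ (hClt m hm)
            · rw [if_neg hm] at hb1
              exact hb1
          by_cases hw : w ∈ WC
          · rw [if_pos hw] at hb2
            have hμwm := hfW1 w hw
            have hνwm := hfW3 w hw
            rcases LO.lttricho (Q.womenPref w) (ν.womenMatch w) (some m) with h' | h' | h'
            · exact hνNB m w ⟨hb1', h'⟩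
            · rw [(ν.consistent m w).mpr h'] at hb1'
              exact LO.ltirrefl _ _ hb1'
            · -- the top dominance case
              have hμm : (P.menPref m).lt (μ.menMatch m) (some w) := by
                by_cases hm : m ∈ C
                · rw [if_pos hm] at hb1
                  rw [← hQmeq m]
                  exact hb1
                · rw [← hCeq m hm, ← hQmeq m]
                  exact hb1'
              have hNB := hμNB m w
              simp only [Blocks, not_and] at hNB
              have hle : (P.womenPref w).le (some m) (μ.womenMatch w) :=
                LO.leofnotlt _ (hNB hμm)
              have hne2 : (some m : Option M) ≠ μ.womenMatch w := by
                intro hc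
                rw [← hc] at hb2
                exact LO.ltirrefl _ _ hb2
              have hPw : (P.womenPref w).lt (some m) (μ.womenMatch w) := LO.ltoflene _ hle hne2
              apply hTD w (fW w hw).2 (μ.womenMatch w) (some m)
              · refine ⟨P.womenPref w, hPD.2 w, ?_, hPw, hμIRw w⟩
                have := hfW6 w hw
                rwa [hνwm] at this
              · refine ⟨Q.womenPref w, hQD.2 w, ?_, hb2, ?_⟩
                · rw [← hνwm]
                  exact h'
                · exact LO.letrans _ (hIRQ w hw) (LO.leoflt _ hb2)
          · rw [if_neg hw] at hb2
            exact hνNB m w ⟨hb1', hb2⟩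
      -- contradiction with men-optimality of ν at Q
      have hopt := hν.2 lam hlamstable mC₀
      rw [hlamm mC₀, if_pos hmC₀] at hopt
      have hltq : (Q.menPref mC₀).lt (ν.menMatch mC₀) (μ.menMatch mC₀) := by
        rw [hQmeq mC₀]
        exact hClt mC₀ hmC₀
      exact LO.ltirrefl _ _ (LO.ltofleoflt _ hopt hltq)
end
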